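/- arXiv:2101.12652 — 4 statements merged into one kernel-verified Lean document; each statement's English description precedes it below -/
import Mathlib

section
/- Let N ≥ 1, σ > 0, and let u₀ ∈ C²([−1−σ,1+σ]) be even with u₀ > 0 on (−1,1), u₀(±1) = 0 and u₀ < 0 on [−1−σ,−1) ∪ (1,1+σ]. Let n ∈ ℕ, μ₁ > μ₂ > … > μ_n > 0, α₁ = −1, α₂,…,α_n ∈ ℝ, and for i = 1,…,n let ω_i ∈ C([−1−σ,1+σ]) be positive, even, with ω_i(0) = 1 and ω_i nonincreasing in |y|. Define φ(x,y) = Σ_{j=1}^N Σ_{i=1}^n α_i cosh(√μ_i x_j) ω_i(y) and, for ε > 0 small enough that u₀(0) + ε φ(0,…,0,0) > 0, let Ω_ε be the connected component of {(x,y) ∈ ℝ^N × (−1−σ,1+σ) : u₀(y) + ε φ(x,y) > 0} containing the origin. Then for every η ∈ (0,σ) there exists ε₀ > 0 such that for all ε ∈ (0,ε₀), Ω_ε ⊆ [−M_ε, M_ε]^N × [−1−η, 1+η], where M_ε = (1/√μ₁) log( 3‖u₀‖_{L^∞(−1−η,1+η)} / (ε ω₁(1+η)) ). -/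
open MeasureTheory Set Filter Topology

noncomputable section

/-- Points of `ℝ^{N+1}` written `(x, y)` with `x ∈ ℝ^N`, `y ∈ ℝ`. -/
abbrev Pt (N : ℕ) := (Fin N → ℝ) × ℝ

/-- `φ(x,y) = Σ_j Σ_i α_i cosh(√μ_i x_j) ω_i(y)`. -/
def phi (N n : ℕ) (μ α : Fin n → ℝ) (ω : Fin n → ℝ → ℝ) (p : Pt N) : ℝ :=
  ∑ j : Fin N, ∑ i : Fin n, α i * Real.cosh (Real.sqrt (μ i) * p.1 j) * ω i p.2

/-- `Ω_ε`: the connected component containing the origin of the set where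
`u₀(y) + ε φ(x,y) > 0` (within the strip `ℝ^N × (−1−σ, 1+σ)`). -/
def Ome (N n : ℕ) (σ : ℝ) (u₀ : ℝ → ℝ) (μ α : Fin n → ℝ) (ω : Fin n → ℝ → ℝ) (ε : ℝ) :
    Set (Pt N) :=
  connectedComponentIn
    {p : Pt N | p.2 ∈ Ioo (-1 - σ) (1 + σ) ∧ 0 < u₀ p.2 + ε * phi N n μ α ω p} 0

lemma comp_subset_aux {X : Type*} [TopologicalSpace X] {S U V : Set X} (hU : IsOpen U)
    (hV : IsOpen V) (hdisj : Disjoint U V) (hSUV : S ⊆ U ∪ V) (x : X) (hxU : x ∈ U) :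
    connectedComponentIn S x ⊆ U := by
  by_cases hx : x ∈ S
  · exact IsPreconnected.subset_left_of_subset_union hU hV hdisj
      ((connectedComponentIn_subset S x).trans hSUV)
      ⟨x, mem_connectedComponentIn hx, hxU⟩ isPreconnected_connectedComponentIn
  · rw [connectedComponentIn_eq_empty hx]; exact empty_subset _

lemma rpow_tendsto_aux {c : ℝ} (hc : 0 < c) :
    Tendsto (fun ε : ℝ => ε ^ c) (𝓝[>] (0:ℝ)) (𝓝 0) := by
  have h := (Real.continuousAt_rpow_const 0 c (Or.inr hc.le)).tendsto
  rw [Real.zero_rpow hc.ne'] at h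
  exact h.mono_left nhdsWithin_le_nhds

lemma cosh_le_exp_abs_aux (x : ℝ) : Real.cosh x ≤ Real.exp |x| := by
  rw [← Real.cosh_abs, Real.cosh_eq]
  nlinarith [Real.exp_le_exp.2 (show -|x| ≤ |x| by linarith [abs_nonneg x]),
    Real.exp_pos (-|x|)]

lemma exp_div_two_le_cosh_aux (x : ℝ) : Real.exp x / 2 ≤ Real.cosh x := by
  rw [Real.cosh_eq]; nlinarith [Real.exp_pos (-x)]

set_option maxHeartbeats 1000000 in
theorem statement3 (N : ℕ) (hN : 1 ≤ N) (σ : ℝ) (hσ : 0 < σ)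
    (u₀ : ℝ → ℝ) (hu₀C : ContDiffOn ℝ 2 u₀ (Icc (-1 - σ) (1 + σ)))
    (hu₀even : ∀ y, u₀ (-y) = u₀ y)
    (hu₀pos : ∀ y ∈ Ioo (-1:ℝ) 1, 0 < u₀ y)
    (hu₀1 : u₀ 1 = 0) (hu₀m1 : u₀ (-1) = 0)
    (hu₀neg : ∀ y ∈ Ico (-1 - σ) (-1) ∪ Ioc 1 (1 + σ), u₀ y < 0)
    (n : ℕ) (hn : 0 < n)
    (μ : Fin n → ℝ) (hμanti : StrictAnti μ) (hμpos : ∀ i, 0 < μ i)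
    (α : Fin n → ℝ) (hα1 : α ⟨0, hn⟩ = -1)
    (ω : Fin n → ℝ → ℝ)
    (hωcont : ∀ i, ContinuousOn (ω i) (Icc (-1 - σ) (1 + σ)))
    (hωpos : ∀ i, ∀ y ∈ Icc (-1 - σ) (1 + σ), 0 < ω i y)
    (hωeven : ∀ i y, ω i (-y) = ω i y)
    (hω0 : ∀ i, ω i 0 = 1)
    (hωmono : ∀ i, ∀ y ∈ Icc (-1 - σ) (1 + σ), ∀ z ∈ Icc (-1 - σ) (1 + σ),
      |y| ≤ |z| → ω i z ≤ ω i y) :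
    ∀ η ∈ Ioo (0:ℝ) σ, ∃ ε₀ > 0, ∀ ε ∈ Ioo (0:ℝ) ε₀,
      Ome N n σ u₀ μ α ω ε ⊆
        {p : Pt N |
          (∀ j, |p.1 j| ≤ (1 / Real.sqrt (μ ⟨0, hn⟩)) *
            Real.log (3 * sSup ((fun y => |u₀ y|) '' Ioo (-1 - η) (1 + η)) /
              (ε * ω ⟨0, hn⟩ (1 + η)))) ∧
          p.2 ∈ Icc (-1 - η) (1 + η)} := by
  intro η hη
  obtain ⟨hη0, hησ⟩ := hη
  set i0 : Fin n := ⟨0, hn⟩ with hi0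
  have hs1pos : 0 < Real.sqrt (μ i0) := Real.sqrt_pos.2 (hμpos i0)
  have h1η_mem : (1+η) ∈ Icc (-1-σ) (1+σ) := ⟨by linarith, by linarith⟩
  have hwpos : 0 < ω i0 (1 + η) := hωpos i0 _ h1η_mem
  set w : ℝ := ω i0 (1 + η) with hw
  set K : ℝ := sSup ((fun y => |u₀ y|) '' Ioo (-1 - η) (1 + η)) with hK
  have hsub : Ioo (-1-η) (1+η) ⊆ Icc (-1-σ) (1+σ) := fun y hy =>
    ⟨by have := hy.1; linarith, by have := hy.2; linarith⟩
  have hbdd : BddAbove ((fun y => |u₀ y|) '' Ioo (-1 - η) (1 + η)) := by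
    have hcomp : IsCompact ((fun y => |u₀ y|) '' Icc (-1-σ) (1+σ)) :=
      (isCompact_Icc).image_of_continuousOn (hu₀C.continuousOn.abs)
    exact hcomp.bddAbove.mono (image_mono hsub)
  have hKge : ∀ y ∈ Ioo (-1-η) (1+η), |u₀ y| ≤ K := fun y hy => le_csSup hbdd ⟨y, hy, rfl⟩
  have hKpos : 0 < K := by
    have h0 : (0:ℝ) ∈ Ioo (-1-η) (1+η) := ⟨by linarith, by linarith⟩
    have h1 := hKge 0 h0
    have hu0 : 0 < u₀ 0 := hu₀pos 0 ⟨by norm_num, by norm_num⟩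
    calc (0:ℝ) < u₀ 0 := hu0
      _ ≤ |u₀ 0| := le_abs_self _
      _ ≤ K := h1
  have hu1η_neg : u₀ (1+η) < 0 := hu₀neg _ (Or.inr ⟨by linarith, by linarith⟩)
  set δ : ℝ := -u₀ (1+η) with hδ
  have hδpos : 0 < δ := by simp only [hδ]; linarith
  have hKbound : ∀ y : ℝ, |y| ≤ 1+η → u₀ y ≤ K := by
    intro y hy
    rcases lt_or_eq_of_le hy with h | h
    · have hy' : y ∈ Ioo (-1-η) (1+η) := by
        rw [abs_lt] at h; constructor <;> linarith [h.1, h.2]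
      exact (le_abs_self _).trans (hKge y hy')
    · rcases (abs_eq (by linarith : (0:ℝ) ≤ 1+η)).1 h with h' | h'
      · rw [h']; linarith
      · rw [h', hu₀even]; linarith
  have hωle1 : ∀ i, ∀ y ∈ Icc (-1-σ) (1+σ), ω i y ≤ 1 := by
    intro i y hy
    have h0 : (0:ℝ) ∈ Icc (-1-σ) (1+σ) := ⟨by linarith, by linarith⟩
    have h := hωmono i 0 h0 y hy (by simp [abs_nonneg])
    rwa [hω0 i] at h
  have hωgew : ∀ y : ℝ, |y| ≤ 1+η → w ≤ ω i0 y := by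
    intro y hy
    have hy' : y ∈ Icc (-1-σ) (1+σ) := by
      rw [abs_le] at hy; constructor <;> linarith [hy.1, hy.2]
    have h : |y| ≤ |1+η| := by rw [abs_of_nonneg (by linarith : (0:ℝ) ≤ 1+η)]; exact hy
    exact hωmono i0 y hy' (1+η) h1η_mem h
  -- M and remainder R
  set M : ℝ → ℝ := fun ε => (1 / Real.sqrt (μ i0)) * Real.log (3 * K / (ε * w)) with hMdef
  set R : ℝ → ℝ := fun ε =>
    N * ∑ i ∈ Finset.univ.erase i0, |α i| * Real.exp (Real.sqrt (μ i) * M ε) with hRdef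
  -- `ε * R ε → 0`
  have htend : Tendsto (fun ε => ε * R ε) (𝓝[>] (0:ℝ)) (𝓝 0) := by
    have hterm : ∀ i ∈ Finset.univ.erase i0,
        Tendsto (fun ε => ε * (|α i| * Real.exp (Real.sqrt (μ i) * M ε)))
          (𝓝[>] (0:ℝ)) (𝓝 0) := by
      intro i hi
      have hii0 : i ≠ i0 := (Finset.mem_erase.1 hi).1
      have hi0lt : i0 < i :=
        lt_of_le_of_ne (by simp [hi0, Fin.le_def]) hii0.symm
      have hμlt : μ i < μ i0 := hμanti hi0lt
      set θ : ℝ := Real.sqrt (μ i) / Real.sqrt (μ i0) with hθ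
      have hθpos : 0 < θ := div_pos (Real.sqrt_pos.2 (hμpos i)) hs1pos
      have hθlt1 : θ < 1 := by
        rw [hθ, div_lt_one hs1pos]
        exact Real.sqrt_lt_sqrt (hμpos i).le hμlt
      set c : ℝ := 3 * K / w with hc
      have hcpos : 0 < c := by positivity
      have heq : ∀ᶠ ε in 𝓝[>] (0:ℝ),
          ε * (|α i| * Real.exp (Real.sqrt (μ i) * M ε))
            = |α i| * c ^ θ * ε ^ (1 - θ) := by
        filter_upwards [eventually_mem_nhdsWithin] with ε (hε : ε ∈ Ioi (0:ℝ))
        have hεpos : (0:ℝ) < ε := hε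
        have harg : 3 * K / (ε * w) = c / ε := by
          rw [hc, div_div, mul_comm w ε]
        have h1 : Real.sqrt (μ i) * M ε = Real.log (c / ε) * θ := by
          simp only [hMdef, harg]
          field_simp [hθ]
          have hθ' : Real.sqrt (μ i0) * θ = Real.sqrt (μ i) := by
            rw [hθ]; field_simp [hs1pos.ne']
          rw [← hθ']; ring
        have h2 : Real.exp (Real.sqrt (μ i) * M ε) = (c / ε) ^ θ := by
          rw [h1, Real.rpow_def_of_pos (by positivity)]
        rw [h2, Real.div_rpow hcpos.le hεpos.le]
        rw [Real.rpow_sub hεpos, Real.rpow_one]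
        field_simp
      have hlim : Tendsto (fun ε : ℝ => |α i| * c ^ θ * ε ^ (1 - θ)) (𝓝[>] (0:ℝ)) (𝓝 0) := by
        have := (rpow_tendsto_aux (by linarith : (0:ℝ) < 1 - θ)).const_mul (|α i| * c ^ θ)
        simpa using this
      exact Filter.Tendsto.congr' (heq.mono fun ε h => h.symm) hlim
    have hsum := tendsto_finset_sum _ hterm
    have hre : (fun ε => ε * R ε)
        = fun ε => (N:ℝ) * ∑ i ∈ Finset.univ.erase i0,
            ε * (|α i| * Real.exp (Real.sqrt (μ i) * M ε)) := by
      funext ε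
      simp only [hRdef, Finset.mul_sum]
      exact Finset.sum_congr rfl fun i _ => by ring
    rw [hre]
    simpa using (hsum.const_mul (N:ℝ))
  have hev : ∀ᶠ ε in 𝓝[>] (0:ℝ), ε * R ε < min δ (K/2) :=
    htend.eventually_lt_const (by positivity)
  rw [eventually_nhdsWithin_iff, Metric.eventually_nhds_iff] at hev
  obtain ⟨ε₁, hε₁pos, hε₁⟩ := hev
  refine ⟨min ε₁ (K / w), by positivity, ?_⟩
  rintro ε ⟨hεpos, hεlt⟩
  have hεK : ε < K / w := hεlt.trans_le (min_le_right _ _)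
  have hεsmall : ε * R ε < min δ (K/2) := by
    apply hε₁
    · rw [Real.dist_eq, sub_zero, abs_of_pos hεpos]
      exact hεlt.trans_le (min_le_left _ _)
    · exact hεpos
  have hRδ : ε * R ε < δ := hεsmall.trans_le (min_le_left _ _)
  have hRK : ε * R ε < K / 2 := hεsmall.trans_le (min_le_right _ _)
  have hargpos : 0 < 3 * K / (ε * w) := by positivity
  have h3gt1 : 1 < 3 * K / (ε * w) := by
    rw [lt_div_iff₀ (by positivity)]
    have : ε * w < K := (lt_div_iff₀ hwpos).1 hεK
    nlinarith
  have hMpos : 0 < M ε := by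
    simp only [hMdef]
    exact mul_pos (by positivity) (Real.log_pos h3gt1)
  have hexpM : Real.exp (Real.sqrt (μ i0) * M ε) = 3 * K / (ε * w) := by
    simp only [hMdef]
    rw [show Real.sqrt (μ i0) * ((1 / Real.sqrt (μ i0)) * Real.log (3 * K / (ε * w)))
        = Real.log (3 * K / (ε * w)) by field_simp]
    exact Real.exp_log hargpos
  -- bound on the remainder part of phi
  have hrest : ∀ p : Pt N, (∀ j, |p.1 j| ≤ M ε) → p.2 ∈ Icc (-1-σ) (1+σ) →
      (∑ j : Fin N, ∑ i ∈ Finset.univ.erase i0,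
        α i * Real.cosh (Real.sqrt (μ i) * p.1 j) * ω i p.2) ≤ R ε := by
    intro p hx hy
    have hterm : ∀ j : Fin N, ∀ i ∈ Finset.univ.erase i0,
        α i * Real.cosh (Real.sqrt (μ i) * p.1 j) * ω i p.2
          ≤ |α i| * Real.exp (Real.sqrt (μ i) * M ε) := by
      intro j i _
      have hb : Real.cosh (Real.sqrt (μ i) * p.1 j) ≤ Real.exp (Real.sqrt (μ i) * M ε) := by
        refine (cosh_le_exp_abs_aux _).trans (Real.exp_le_exp.2 ?_)
        rw [abs_mul, abs_of_nonneg (Real.sqrt_nonneg _)]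
        exact mul_le_mul_of_nonneg_left (hx j) (Real.sqrt_nonneg _)
      have hb0 : 0 < Real.cosh (Real.sqrt (μ i) * p.1 j) := Real.cosh_pos _
      have hc0 : 0 < ω i p.2 := hωpos i _ hy
      have hc1 : ω i p.2 ≤ 1 := hωle1 i _ hy
      calc α i * Real.cosh (Real.sqrt (μ i) * p.1 j) * ω i p.2
          ≤ |α i| * Real.cosh (Real.sqrt (μ i) * p.1 j) * ω i p.2 :=
            mul_le_mul_of_nonneg_right
              (mul_le_mul_of_nonneg_right (le_abs_self _) hb0.le) hc0.le
        _ ≤ |α i| * Real.exp (Real.sqrt (μ i) * M ε) * ω i p.2 :=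
            mul_le_mul_of_nonneg_right
              (mul_le_mul_of_nonneg_left hb (abs_nonneg _)) hc0.le
        _ ≤ |α i| * Real.exp (Real.sqrt (μ i) * M ε) * 1 :=
            mul_le_mul_of_nonneg_left hc1 (by positivity)
        _ = |α i| * Real.exp (Real.sqrt (μ i) * M ε) := mul_one _
    calc (∑ j : Fin N, ∑ i ∈ Finset.univ.erase i0,
          α i * Real.cosh (Real.sqrt (μ i) * p.1 j) * ω i p.2)
        ≤ ∑ j : Fin N, ∑ i ∈ Finset.univ.erase i0,
            |α i| * Real.exp (Real.sqrt (μ i) * M ε) :=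
          Finset.sum_le_sum fun j _ => Finset.sum_le_sum (hterm j)
      _ = R ε := by
          rw [Finset.sum_const, Finset.card_univ, Fintype.card_fin, nsmul_eq_mul, hRdef]
  -- the splitting of phi
  have hsplit : ∀ p : Pt N, phi N n μ α ω p =
      (∑ j : Fin N, α i0 * Real.cosh (Real.sqrt (μ i0) * p.1 j) * ω i0 p.2)
      + ∑ j : Fin N, ∑ i ∈ Finset.univ.erase i0,
          α i * Real.cosh (Real.sqrt (μ i) * p.1 j) * ω i p.2 := by
    intro p
    unfold phi
    rw [← Finset.sum_add_distrib]
    refine Finset.sum_congr rfl fun j _ => ?_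
    rw [← Finset.add_sum_erase _ _ (Finset.mem_univ i0)]
  -- claim A : top/bottom boundary
  have claimA : ∀ p : Pt N, p.2 ∈ Ioo (-1-σ) (1+σ) → (∀ j, |p.1 j| ≤ M ε) →
      |p.2| = 1+η → ¬ (0 < u₀ p.2 + ε * phi N n μ α ω p) := by
    intro p hp hx hyeq
    have hymem : p.2 ∈ Icc (-1-σ) (1+σ) := ⟨hp.1.le, hp.2.le⟩
    have hu : u₀ p.2 = -δ := by
      rcases (abs_eq (by linarith : (0:ℝ) ≤ 1+η)).1 hyeq with h' | h'
      · rw [h', hδ]; ring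
      · rw [h', hu₀even, hδ]; ring
    have hfirst : (∑ j : Fin N, α i0 * Real.cosh (Real.sqrt (μ i0) * p.1 j) * ω i0 p.2) ≤ 0 := by
      apply Finset.sum_nonpos
      intro j _
      rw [hα1]
      have := Real.cosh_pos (Real.sqrt (μ i0) * p.1 j)
      have := hωpos i0 _ hymem
      nlinarith
    have hφ : phi N n μ α ω p ≤ R ε := by
      rw [hsplit p]
      have := hrest p hx hymem
      linarith
    have : ε * phi N n μ α ω p ≤ ε * R ε := mul_le_mul_of_nonneg_left hφ hεpos.le
    intro hcon
    rw [hu] at hcon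
    linarith
  -- claim B : lateral boundary
  have claimB : ∀ p : Pt N, p.2 ∈ Ioo (-1-σ) (1+σ) → (∀ j, |p.1 j| ≤ M ε) →
      |p.2| ≤ 1+η → (∃ j0, |p.1 j0| = M ε) → ¬ (0 < u₀ p.2 + ε * phi N n μ α ω p) := by
    intro p hp hx hyle ⟨j0, hj0⟩
    have hymem : p.2 ∈ Icc (-1-σ) (1+σ) := ⟨hp.1.le, hp.2.le⟩
    have hωy : 0 < ω i0 p.2 := hωpos i0 _ hymem
    have hfirst : (∑ j : Fin N, α i0 * Real.cosh (Real.sqrt (μ i0) * p.1 j) * ω i0 p.2)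
        ≤ -(Real.cosh (Real.sqrt (μ i0) * M ε) * ω i0 p.2) := by
      have hsingle : Real.cosh (Real.sqrt (μ i0) * p.1 j0) * ω i0 p.2
          ≤ ∑ j : Fin N, Real.cosh (Real.sqrt (μ i0) * p.1 j) * ω i0 p.2 := by
        apply Finset.single_le_sum (f := fun j => Real.cosh (Real.sqrt (μ i0) * p.1 j) * ω i0 p.2)
          (fun j _ => by positivity) (Finset.mem_univ j0)
      have hcoshj0 : Real.cosh (Real.sqrt (μ i0) * p.1 j0)
          = Real.cosh (Real.sqrt (μ i0) * M ε) := by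
        rw [← Real.cosh_abs, abs_mul, abs_of_nonneg (Real.sqrt_nonneg _), hj0]
      calc (∑ j : Fin N, α i0 * Real.cosh (Real.sqrt (μ i0) * p.1 j) * ω i0 p.2)
          = -(∑ j : Fin N, Real.cosh (Real.sqrt (μ i0) * p.1 j) * ω i0 p.2) := by
            rw [← Finset.sum_neg_distrib]
            exact Finset.sum_congr rfl fun j _ => by rw [hα1]; ring
        _ ≤ -(Real.cosh (Real.sqrt (μ i0) * p.1 j0) * ω i0 p.2) := by linarith
        _ = -(Real.cosh (Real.sqrt (μ i0) * M ε) * ω i0 p.2) := by rw [hcoshj0]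
    have hcoshbig : (3:ℝ) * K / 2 ≤ ε * (Real.cosh (Real.sqrt (μ i0) * M ε) * ω i0 p.2) := by
      have h1 : Real.exp (Real.sqrt (μ i0) * M ε) / 2 ≤ Real.cosh (Real.sqrt (μ i0) * M ε) :=
        exp_div_two_le_cosh_aux _
      rw [hexpM] at h1
      have hwy : w ≤ ω i0 p.2 := hωgew _ hyle
      have h2 : ε * ((3 * K / (ε * w)) / 2 * w) = 3 * K / 2 := by field_simp
      calc (3:ℝ) * K / 2 = ε * ((3 * K / (ε * w)) / 2 * w) := h2.symm
        _ ≤ ε * (Real.cosh (Real.sqrt (μ i0) * M ε) * w) := by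
            apply mul_le_mul_of_nonneg_left _ hεpos.le
            exact mul_le_mul_of_nonneg_right h1 hwpos.le
        _ ≤ ε * (Real.cosh (Real.sqrt (μ i0) * M ε) * ω i0 p.2) := by
            apply mul_le_mul_of_nonneg_left _ hεpos.le
            exact mul_le_mul_of_nonneg_left hwy (Real.cosh_pos _).le
    have hφ : phi N n μ α ω p ≤ -(Real.cosh (Real.sqrt (μ i0) * M ε) * ω i0 p.2) + R ε := by
      rw [hsplit p]
      have := hrest p hx hymem
      linarith
    have hεφ : ε * phi N n μ α ω p
        ≤ ε * (-(Real.cosh (Real.sqrt (μ i0) * M ε) * ω i0 p.2) + R ε) :=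
      mul_le_mul_of_nonneg_left hφ hεpos.le
    have huy : u₀ p.2 ≤ K := hKbound _ hyle
    intro hcon
    have : ε * (-(Real.cosh (Real.sqrt (μ i0) * M ε) * ω i0 p.2) + R ε)
        = -(ε * (Real.cosh (Real.sqrt (μ i0) * M ε) * ω i0 p.2)) + ε * R ε := by ring
    linarith [this ▸ hεφ]
  -- topology
  set S : Set (Pt N) :=
    {p : Pt N | p.2 ∈ Ioo (-1 - σ) (1 + σ) ∧ 0 < u₀ p.2 + ε * phi N n μ α ω p} with hS
  set B : Set (Pt N) := {p : Pt N | (∀ j, |p.1 j| < M ε) ∧ |p.2| < 1+η} with hB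
  set C : Set (Pt N) := {p : Pt N | (∀ j, |p.1 j| ≤ M ε) ∧ |p.2| ≤ 1+η} with hC
  have hBopen : IsOpen B := by
    have : B = (⋂ j : Fin N, {p : Pt N | |p.1 j| < M ε}) ∩ {p : Pt N | |p.2| < 1+η} := by
      ext p; simp [hB, mem_iInter]
    rw [this]
    refine IsOpen.inter (isOpen_iInter_of_finite fun j => ?_) ?_
    · exact isOpen_lt ((continuous_apply j).comp continuous_fst).abs continuous_const
    · exact isOpen_lt continuous_snd.abs continuous_const
  have hCclosed : IsClosed C := by
    have : C = (⋂ j : Fin N, {p : Pt N | |p.1 j| ≤ M ε}) ∩ {p : Pt N | |p.2| ≤ 1+η} := by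
      ext p; simp [hC, mem_iInter]
    rw [this]
    refine IsClosed.inter (isClosed_iInter fun j => ?_) ?_
    · exact isClosed_le ((continuous_apply j).comp continuous_fst).abs continuous_const
    · exact isClosed_le continuous_snd.abs continuous_const
  have hBC : B ⊆ C := fun p hp => ⟨fun j => (hp.1 j).le, hp.2.le⟩
  have hdisj : Disjoint B Cᶜ := disjoint_compl_right.mono_left hBC
  have h0B : (0 : Pt N) ∈ B := by
    constructor
    · intro j
      show |(0 : Fin N → ℝ) j| < M ε
      simpa using hMpos
    · show |(0:ℝ)| < 1 + η
      simp; linarith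
  have hSsub : S ⊆ B ∪ Cᶜ := by
    intro p hp
    by_cases hpC : p ∈ C
    · left
      obtain ⟨hple, hpyle⟩ := hpC
      have hylt : |p.2| < 1+η := by
        rcases lt_or_eq_of_le hpyle with h | h
        · exact h
        · exact absurd hp.2 (claimA p hp.1 hple h)
      refine ⟨fun j => ?_, hylt⟩
      rcases lt_or_eq_of_le (hple j) with h | h
      · exact h
      · exact absurd hp.2 (claimB p hp.1 hple hpyle ⟨j, h⟩)
    · right; exact hpC
  intro p hp
  have hpB : p ∈ B := comp_subset_aux hBopen hCclosed.isOpen_compl hdisj hSsub 0 h0B hp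
  refine ⟨fun j => (hpB.1 j).le, ?_⟩
  have := abs_lt.1 hpB.2
  constructor <;> [linarith [this.1]; linarith [this.2]]
end
end

section
/- Let u₀ ∈ C²((−1−σ,1+σ)) satisfy u₀'(0) = 0 and u₀''(0) = −λ f(u₀(0)) < 0 (where λ > 0 and f(u₀(0)) > 0). For i = 1,…,n let ω_i ∈ C²((−1−σ,1+σ)) be even with ω_i(0) = 1 and ω_i'(0) = 0, let μ₁ > … > μ_n > 0 and α₁,…,α_n ∈ ℝ, and suppose t₁ < … < t_k are nondegenerate local maximum points of g(t) = Σ_{i=1}^n α_i cosh(√μ_i t), i.e. g'(t_m) = 0 and g''(t_m) < 0 for each m. Define U_ε(x,y) = u₀(y) + ε Σ_{j=1}^N Σ_{i=1}^n α_i cosh(√μ_i x_j) ω_i(y) on ℝ^N × (−1−σ,1+σ). Then there exists ε₀ > 0 such that for all ε ∈ (0,ε₀) and every m = 1,…,k, the point (t_m,…,t_m,0) is a nondegenerate local maximum of U_ε: ∇U_ε(t_m,…,t_m,0) = 0 and the Hessian matrix of U_ε at (t_m,…,t_m,0) is negative definite. In particular U_ε has at least k distinct nondegenerate local maximum points. 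-/
open MeasureTheory Set Filter Topology

noncomputable section

/-- Second directional derivative of `u` at `p` along `v`. -/
def D2 {N : ℕ} (u : Pt N → ℝ) (v : Pt N) (p : Pt N) : ℝ :=
  fderiv ℝ (fun q => fderiv ℝ u q v) p v

/-- `U_ε(x,y) = u₀(y) + ε Σ_j Σ_i α_i cosh(√μ_i x_j) ω_i(y)`. -/
def Ueps (N n : ℕ) (u₀ : ℝ → ℝ) (μ α : Fin n → ℝ) (ω : Fin n → ℝ → ℝ) (ε : ℝ)
    (p : Pt N) : ℝ :=
  u₀ p.2 + ε * ∑ j : Fin N, ∑ i : Fin n, α i * Real.cosh (Real.sqrt (μ i) * p.1 j) * ω i p.2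

/-- Second derivative test: a critical point of a `C²` function with negative definite
second derivative is a local maximum. -/
lemma my_secondDerivTest {E : Type*} [NormedAddCommGroup E] [NormedSpace ℝ E]
    [FiniteDimensional ℝ E] [Nontrivial E] {u : E → ℝ} {p : E}
    (hu : ContDiffAt ℝ 2 u p) (h1 : fderiv ℝ u p = 0)
    (h2 : ∀ v : E, v ≠ 0 → fderiv ℝ (fderiv ℝ u) p v v < 0) : IsLocalMax u p := by
  obtain ⟨s, hs, hcd⟩ := hu.contDiffOn (le_refl 2) (by simp)
  set V : Set E := interior s with hVdef
  have hV : IsOpen V := isOpen_interior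
  have hpV : p ∈ V := mem_interior_iff_mem_nhds.2 hs
  have hcdV : ContDiffOn ℝ 2 u V := hcd.mono interior_subset
  have hf'1 : ContDiffOn ℝ 1 (fderiv ℝ u) V := hcdV.fderiv_of_isOpen hV (by norm_num)
  set B : E → E →L[ℝ] E →L[ℝ] ℝ := fderiv ℝ (fderiv ℝ u) with hB
  have hBcont : ContinuousOn B V := hf'1.continuousOn_fderiv_of_isOpen hV le_rfl
  -- the set where the quadratic form is negative
  set F : E × E → ℝ := fun qv => B qv.1 qv.2 qv.2 with hF
  have hFcont : ContinuousOn F (V ×ˢ (univ : Set E)) := by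
    have h1' : ContinuousOn (fun qv : E × E => B qv.1) (V ×ˢ (univ : Set E)) :=
      hBcont.comp continuousOn_fst (fun qv hqv => hqv.1)
    have h2' : ContinuousOn (fun qv : E × E => qv.2) (V ×ˢ (univ : Set E)) :=
      continuousOn_snd
    exact (h1'.clm_apply h2').clm_apply h2'
  have hWopen : IsOpen ((V ×ˢ (univ : Set E)) ∩ F ⁻¹' (Iio 0)) :=
    hFcont.isOpen_inter_preimage (hV.prod isOpen_univ) isOpen_Iio
  have hsub : ({p} ×ˢ Metric.sphere (0:E) 1) ⊆ (V ×ˢ (univ : Set E)) ∩ F ⁻¹' (Iio 0) := by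
    rintro ⟨q, v⟩ ⟨hq, hv⟩
    simp only [mem_singleton_iff] at hq
    subst hq
    refine ⟨⟨hpV, trivial⟩, ?_⟩
    have hvne : v ≠ 0 := by
      intro h
      rw [h] at hv; simp at hv
    exact h2 v hvne
  obtain ⟨U1, U2, hU1, hU2, hpU1, hsphU2, hUsub⟩ :=
    generalized_tube_lemma isCompact_singleton (isCompact_sphere (0:E) 1) hWopen hsub
  obtain ⟨δ₁, hδ₁pos, hδ₁⟩ := Metric.isOpen_iff.1 hU1 p (hpU1 rfl)
  obtain ⟨δ₂, hδ₂pos, hδ₂⟩ := Metric.isOpen_iff.1 hV p hpV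
  set δ := min δ₁ δ₂ with hδdef
  have hδpos : 0 < δ := lt_min hδ₁pos hδ₂pos
  have hballV : Metric.ball p δ ⊆ V := fun q hq =>
    hδ₂ (Metric.mem_ball.2 (lt_of_lt_of_le (Metric.mem_ball.1 hq) (min_le_right _ _)))
  have hballU1 : Metric.ball p δ ⊆ U1 := fun q hq =>
    hδ₁ (Metric.mem_ball.2 (lt_of_lt_of_le (Metric.mem_ball.1 hq) (min_le_left _ _)))
  have key : ∀ q ∈ Metric.ball p δ, ∀ v : E, B q v v ≤ 0 := by
    intro q hq v
    rcases eq_or_ne v 0 with rfl | hv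
    · simp
    · have hnv : (0:ℝ) < ‖v‖ := norm_pos_iff.2 hv
      set w : E := ‖v‖⁻¹ • v with hw
      have hwS : w ∈ Metric.sphere (0:E) 1 := by
        simp [hw, norm_smul, abs_of_pos (inv_pos.2 hnv), inv_mul_cancel₀ hnv.ne']
      have hmem : (q, w) ∈ (V ×ˢ (univ : Set E)) ∩ F ⁻¹' (Iio 0) :=
        hUsub ⟨hballU1 hq, hsphU2 hwS⟩
      have hww : B q w w < 0 := hmem.2
      have hvw : v = ‖v‖ • w := by rw [hw, smul_smul, mul_inv_cancel₀ hnv.ne', one_smul]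
      have hBv : B q v v = ‖v‖^2 * (B q w w) := by
        conv_lhs => rw [hvw]
        simp [_root_.map_smul]
        ring
      rw [hBv]
      exact mul_nonpos_of_nonneg_of_nonpos (sq_nonneg _) hww.le
  have hudiff : ∀ q ∈ V, DifferentiableAt ℝ u q := fun q hq =>
    (hcdV.differentiableOn (by norm_num)).differentiableAt (hV.mem_nhds hq)
  have hf'diff : ∀ q ∈ V, DifferentiableAt ℝ (fderiv ℝ u) q := fun q hq =>
    (hf'1.differentiableOn (by norm_num)).differentiableAt (hV.mem_nhds hq)
  filter_upwards [Metric.ball_mem_nhds p hδpos] with q hq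
  set h : E := q - p with hh
  have hhn : ‖h‖ < δ := by rw [hh, ← dist_eq_norm]; exact Metric.mem_ball.1 hq
  have hline : ∀ τ ∈ Icc (0:ℝ) 1, p + τ • h ∈ Metric.ball p δ := by
    intro τ hτ
    rw [Metric.mem_ball, dist_eq_norm]
    have hnn : ‖p + τ • h - p‖ = |τ| * ‖h‖ := by simp [norm_smul]
    rw [hnn]
    calc |τ| * ‖h‖ ≤ 1 * ‖h‖ := by
          apply mul_le_mul_of_nonneg_right _ (norm_nonneg _)
          rw [abs_of_nonneg hτ.1]; exact hτ.2
      _ < δ := by simpa using hhn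
  set φ : ℝ → ℝ := fun τ => u (p + τ • h) with hφ
  set ψ : ℝ → ℝ := fun τ => fderiv ℝ u (p + τ • h) h with hψ
  have hlineD : ∀ τ : ℝ, HasDerivAt (fun τ : ℝ => p + τ • h) h τ := by
    intro τ
    simpa using ((hasDerivAt_id τ).smul_const h).const_add p
  have hφ' : ∀ τ ∈ Icc (0:ℝ) 1, HasDerivAt φ (ψ τ) τ := by
    intro τ hτ
    have hq' := hballV (hline τ hτ)
    have := ((hudiff _ hq').hasFDerivAt).comp_hasDerivAt τ (hlineD τ)
    simpa [hφ, hψ, Function.comp_def] using this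
  have hψ' : ∀ τ ∈ Icc (0:ℝ) 1, HasDerivAt ψ (B (p + τ • h) h h) τ := by
    intro τ hτ
    have hq' := hballV (hline τ hτ)
    have hst := ((hf'diff _ hq').hasFDerivAt).comp_hasDerivAt τ (hlineD τ)
    have := ((ContinuousLinearMap.apply ℝ ℝ h).hasFDerivAt).comp_hasDerivAt τ hst
    simpa [hψ, Function.comp_def] using this
  have hψ0 : ψ 0 = 0 := by simp [hψ, h1]
  have hψnonpos : ∀ τ ∈ Icc (0:ℝ) 1, ψ τ ≤ 0 := by
    have hanti : AntitoneOn ψ (Icc 0 1) := by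
      apply antitoneOn_of_deriv_nonpos (convex_Icc 0 1)
      · exact fun τ hτ => ((hψ' τ hτ).continuousAt).continuousWithinAt
      · intro τ hτ
        rw [interior_Icc] at hτ
        exact ((hψ' τ (Ioo_subset_Icc_self hτ)).differentiableAt).differentiableWithinAt
      · intro τ hτ
        rw [interior_Icc] at hτ
        rw [(hψ' τ (Ioo_subset_Icc_self hτ)).deriv]
        exact key _ (hline τ (Ioo_subset_Icc_self hτ)) h
    intro τ hτ
    calc ψ τ ≤ ψ 0 := hanti (left_mem_Icc.2 zero_le_one) hτ hτ.1
      _ = 0 := hψ0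
  have hφanti : AntitoneOn φ (Icc 0 1) := by
    apply antitoneOn_of_deriv_nonpos (convex_Icc 0 1)
    · exact fun τ hτ => ((hφ' τ hτ).continuousAt).continuousWithinAt
    · intro τ hτ
      rw [interior_Icc] at hτ
      exact ((hφ' τ (Ioo_subset_Icc_self hτ)).differentiableAt).differentiableWithinAt
    · intro τ hτ
      rw [interior_Icc] at hτ
      rw [(hφ' τ (Ioo_subset_Icc_self hτ)).deriv]
      exact hψnonpos τ (Ioo_subset_Icc_self hτ)
  have := hφanti (left_mem_Icc.2 zero_le_one) (right_mem_Icc.2 zero_le_one) zero_le_one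
  simpa [hφ, hh] using this

set_option maxHeartbeats 2000000 in
theorem statement6 (N : ℕ) (hN : 1 ≤ N) (σ : ℝ) (hσ : 0 < σ)
    (lam : ℝ) (hlam : 0 < lam) (f : ℝ → ℝ)
    (u₀ : ℝ → ℝ) (hu₀C : ContDiffOn ℝ 2 u₀ (Ioo (-1 - σ) (1 + σ)))
    (hu₀' : deriv u₀ 0 = 0)
    (hf0 : 0 < f (u₀ 0))
    (hu₀'' : deriv (deriv u₀) 0 = -(lam * f (u₀ 0)))
    (n : ℕ) (μ : Fin n → ℝ) (hμanti : StrictAnti μ) (hμpos : ∀ i, 0 < μ i)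
    (α : Fin n → ℝ)
    (ω : Fin n → ℝ → ℝ)
    (hωC : ∀ i, ContDiffOn ℝ 2 (ω i) (Ioo (-1 - σ) (1 + σ)))
    (hωeven : ∀ i y, ω i (-y) = ω i y)
    (hω0 : ∀ i, ω i 0 = 1)
    (hω'0 : ∀ i, deriv (ω i) 0 = 0)
    (k : ℕ) (t : Fin k → ℝ) (ht : StrictMono t)
    -- t₁ < … < t_k are nondegenerate local maximum points of g(s) = Σ_i α_i cosh(√μ_i s)
    (hg' : ∀ m, deriv (fun s => ∑ i, α i * Real.cosh (Real.sqrt (μ i) * s)) (t m) = 0)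
    (hg'' : ∀ m, deriv (deriv (fun s => ∑ i, α i * Real.cosh (Real.sqrt (μ i) * s))) (t m) < 0) :
    ∃ ε₀ > (0:ℝ), ∀ ε ∈ Ioo (0:ℝ) ε₀,
      -- the k points ((t_m,…,t_m), 0) are pairwise distinct …
      (∀ m m' : Fin k, m ≠ m' →
        (((fun _ => t m) : Fin N → ℝ), (0:ℝ)) ≠ (((fun _ => t m') : Fin N → ℝ), (0:ℝ))) ∧
      -- … nondegenerate local maxima of U_ε: critical points with negative definite Hessian
      ∀ m : Fin k,
        fderiv ℝ (Ueps N n u₀ μ α ω ε) (((fun _ => t m) : Fin N → ℝ), (0:ℝ)) = 0 ∧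
        (∀ w : Pt N, w ≠ 0 →
          D2 (Ueps N n u₀ μ α ω ε) w (((fun _ => t m) : Fin N → ℝ), (0:ℝ)) < 0) ∧
        IsLocalMax (Ueps N n u₀ μ α ω ε) (((fun _ => t m) : Fin N → ℝ), (0:ℝ)) := by
  have hIopen : IsOpen (Ioo (-1 - σ) (1 + σ)) := isOpen_Ioo
  have h0I : (0:ℝ) ∈ Ioo (-1 - σ) (1 + σ) := ⟨by linarith, by linarith⟩
  -- 1-D differentiability facts
  have hu₀d1 : ∀ y ∈ Ioo (-1 - σ) (1 + σ), HasDerivAt u₀ (deriv u₀ y) y := fun y hy =>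
    ((hu₀C.differentiableOn (by norm_num)).differentiableAt (hIopen.mem_nhds hy)).hasDerivAt
  have hu₀C1 : ContDiffOn ℝ 1 (deriv u₀) (Ioo (-1 - σ) (1 + σ)) :=
    hu₀C.deriv_of_isOpen hIopen (by norm_num)
  have hu₀d2 : HasDerivAt (deriv u₀) (deriv (deriv u₀) 0) 0 :=
    ((hu₀C1.differentiableOn one_ne_zero).differentiableAt (hIopen.mem_nhds h0I)).hasDerivAt
  have hωd1 : ∀ i, ∀ y ∈ Ioo (-1 - σ) (1 + σ), HasDerivAt (ω i) (deriv (ω i) y) y := fun i y hy =>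
    (((hωC i).differentiableOn (by norm_num)).differentiableAt (hIopen.mem_nhds hy)).hasDerivAt
  have hωC1 : ∀ i, ContDiffOn ℝ 1 (deriv (ω i)) (Ioo (-1 - σ) (1 + σ)) := fun i =>
    (hωC i).deriv_of_isOpen hIopen (by norm_num)
  have hωd2 : ∀ i, HasDerivAt (deriv (ω i)) (deriv (deriv (ω i)) 0) 0 := fun i =>
    (((hωC1 i).differentiableOn one_ne_zero).differentiableAt (hIopen.mem_nhds h0I)).hasDerivAt
  -- derivatives of g
  have hgd1 : ∀ s : ℝ, HasDerivAt (fun s => ∑ i, α i * Real.cosh (Real.sqrt (μ i) * s))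
      (∑ i, α i * (Real.sqrt (μ i) * Real.sinh (Real.sqrt (μ i) * s))) s := by
    intro s
    apply HasDerivAt.fun_sum
    intro i _
    have hlin : HasDerivAt (fun s : ℝ => Real.sqrt (μ i) * s) (Real.sqrt (μ i)) s := by
      simpa using (hasDerivAt_id s).const_mul (Real.sqrt (μ i))
    have h2 := ((Real.hasDerivAt_cosh (Real.sqrt (μ i) * s)).comp s hlin).const_mul (α i)
    refine h2.congr_deriv ?_
    ring
  have hgderiv : deriv (fun s => ∑ i, α i * Real.cosh (Real.sqrt (μ i) * s)) =
      fun s => ∑ i, α i * (Real.sqrt (μ i) * Real.sinh (Real.sqrt (μ i) * s)) :=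
    funext fun s => (hgd1 s).deriv
  have hS0 : ∀ m, (∑ i, α i * (Real.sqrt (μ i) * Real.sinh (Real.sqrt (μ i) * t m))) = 0 := by
    intro m
    rw [← (hgd1 (t m)).deriv]
    exact hg' m
  have hgd2 : ∀ s : ℝ, HasDerivAt (deriv (fun s => ∑ i, α i * Real.cosh (Real.sqrt (μ i) * s)))
      (∑ i, α i * (μ i * Real.cosh (Real.sqrt (μ i) * s))) s := by
    intro s
    rw [hgderiv]
    apply HasDerivAt.fun_sum
    intro i _
    have hlin : HasDerivAt (fun s : ℝ => Real.sqrt (μ i) * s) (Real.sqrt (μ i)) s := by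
      simpa using (hasDerivAt_id s).const_mul (Real.sqrt (μ i))
    have h2 := (((Real.hasDerivAt_sinh (Real.sqrt (μ i) * s)).comp s hlin).const_mul
      (Real.sqrt (μ i))).const_mul (α i)
    have hμ : Real.sqrt (μ i) * Real.sqrt (μ i) = μ i := Real.mul_self_sqrt (hμpos i).le
    refine h2.congr_deriv ?_
    linear_combination (α i * Real.cosh (Real.sqrt (μ i) * s)) * hμ
  have hS2 : ∀ m, (∑ i, α i * (μ i * Real.cosh (Real.sqrt (μ i) * t m))) < 0 := by
    intro m
    rw [← (hgd2 (t m)).deriv]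
    exact hg'' m
  -- choice of ε₀
  set Cm : Fin k → ℝ := fun m => ∑ i, α i * Real.cosh (Real.sqrt (μ i) * t m) *
    deriv (deriv (ω i)) 0 with hCm
  set K : ℝ := 1 + ∑ m : Fin k, |(N : ℝ) * Cm m| with hK
  have hKpos : 0 < K := by
    have : (0:ℝ) ≤ ∑ m : Fin k, |(N : ℝ) * Cm m| :=
      Finset.sum_nonneg fun m _ => abs_nonneg _
    rw [hK]; linarith
  have hKge : ∀ m : Fin k, (N : ℝ) * Cm m ≤ K - 1 := by
    intro m
    have h1 : (N : ℝ) * Cm m ≤ |(N : ℝ) * Cm m| := le_abs_self _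
    have h2 : |(N : ℝ) * Cm m| ≤ ∑ m : Fin k, |(N : ℝ) * Cm m| :=
      Finset.single_le_sum (f := fun m : Fin k => |(N:ℝ) * Cm m|) (fun m _ => abs_nonneg _) (Finset.mem_univ m)
    rw [hK]; linarith
  refine ⟨lam * f (u₀ 0) / K, div_pos (mul_pos hlam hf0) hKpos, ?_⟩
  intro ε hε
  have hεpos : 0 < ε := hε.1
  have hA : ∀ m : Fin k, deriv (deriv u₀) 0 + ε * ((N : ℝ) * Cm m) < 0 := by
    intro m
    have h1 : ε * ((N : ℝ) * Cm m) ≤ ε * (K - 1) :=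
      mul_le_mul_of_nonneg_left (hKge m) hεpos.le
    have h2 : ε * K < lam * f (u₀ 0) := by
      have := hε.2
      rw [lt_div_iff₀ hKpos] at this
      linarith
    rw [hu₀'']
    nlinarith
  constructor
  · intro m m' hmm' heq
    apply hmm'
    apply ht.injective
    have := congrFun (congrArg Prod.fst heq) ⟨0, hN⟩
    exact this
  intro m
  set Csnd : Pt N →L[ℝ] ℝ := ContinuousLinearMap.snd ℝ (Fin N → ℝ) ℝ with hCsnd
  set Cproj : Fin N → (Pt N →L[ℝ] ℝ) := fun j =>
    (ContinuousLinearMap.proj j).comp (ContinuousLinearMap.fst ℝ (Fin N → ℝ) ℝ) with hCproj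
  have hsndF : ∀ q : Pt N, HasFDerivAt (fun q : Pt N => q.2) Csnd q := fun q =>
    Csnd.hasFDerivAt
  have hprojF : ∀ (j : Fin N) (q : Pt N), HasFDerivAt (fun q : Pt N => q.1 j) (Cproj j) q :=
    fun j q => (Cproj j).hasFDerivAt
  have hasF : ∀ q : Pt N, q.2 ∈ Ioo (-1 - σ) (1 + σ) →
      HasFDerivAt (Ueps N n u₀ μ α ω ε)
        ((deriv u₀ q.2) • Csnd +
          ε • ∑ j : Fin N, ∑ i : Fin n,
            ((α i * Real.cosh (Real.sqrt (μ i) * q.1 j)) • ((deriv (ω i) q.2) • Csnd) +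
             (ω i q.2) • ((α i) • (Real.sinh (Real.sqrt (μ i) * q.1 j) •
               (Real.sqrt (μ i) • Cproj j))))) q := by
    intro q hq
    have hu0 : HasFDerivAt (fun q : Pt N => u₀ q.2) ((deriv u₀ q.2) • Csnd) q :=
      (hu₀d1 q.2 hq).comp_hasFDerivAt q (hsndF q)
    have hterm : ∀ (j : Fin N) (i : Fin n), HasFDerivAt
        (fun q : Pt N => α i * Real.cosh (Real.sqrt (μ i) * q.1 j) * ω i q.2)
        ((α i * Real.cosh (Real.sqrt (μ i) * q.1 j)) • ((deriv (ω i) q.2) • Csnd) +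
         (ω i q.2) • ((α i) • (Real.sinh (Real.sqrt (μ i) * q.1 j) •
           (Real.sqrt (μ i) • Cproj j)))) q := by
      intro j i
      have hlin : HasFDerivAt (fun q : Pt N => Real.sqrt (μ i) * q.1 j)
          (Real.sqrt (μ i) • Cproj j) q := (hprojF j q).const_mul _
      have hcosh : HasFDerivAt (fun q : Pt N => Real.cosh (Real.sqrt (μ i) * q.1 j))
          (Real.sinh (Real.sqrt (μ i) * q.1 j) • (Real.sqrt (μ i) • Cproj j)) q :=
        (Real.hasDerivAt_cosh _).comp_hasFDerivAt q hlin
      have hw : HasFDerivAt (fun q : Pt N => ω i q.2) ((deriv (ω i) q.2) • Csnd) q :=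
        (hωd1 i q.2 hq).comp_hasFDerivAt q (hsndF q)
      exact (hcosh.const_mul (α i)).mul hw
    have hsum : HasFDerivAt
        (fun q : Pt N => ∑ j : Fin N, ∑ i : Fin n,
          α i * Real.cosh (Real.sqrt (μ i) * q.1 j) * ω i q.2)
        (∑ j : Fin N, ∑ i : Fin n,
          ((α i * Real.cosh (Real.sqrt (μ i) * q.1 j)) • ((deriv (ω i) q.2) • Csnd) +
           (ω i q.2) • ((α i) • (Real.sinh (Real.sqrt (μ i) * q.1 j) •
             (Real.sqrt (μ i) • Cproj j))))) q :=
      HasFDerivAt.fun_sum fun j _ => HasFDerivAt.fun_sum fun i _ => hterm j i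
    exact hu0.add (hsum.const_mul ε)
  have hp2 : ((((fun _ => t m) : Fin N → ℝ), (0:ℝ)) : Pt N).2 ∈ Ioo (-1 - σ) (1 + σ) := h0I
  have hfd := (hasF (((fun _ => t m) : Fin N → ℝ), (0:ℝ)) hp2).fderiv
  have hfd0 : fderiv ℝ (Ueps N n u₀ μ α ω ε) (((fun _ => t m) : Fin N → ℝ), (0:ℝ)) = 0 := by
    rw [hfd]
    apply ContinuousLinearMap.ext
    intro v
    simp [hu₀', hω'0, hω0]
    right
    apply Finset.sum_eq_zero
    intro j _
    calc ∑ i : Fin n, α i * (Real.sinh (Real.sqrt (μ i) * t m) * (Real.sqrt (μ i) * (Cproj j) v))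
        = (∑ i : Fin n, α i * (Real.sqrt (μ i) * Real.sinh (Real.sqrt (μ i) * t m))) *
            (Cproj j) v := by
          rw [Finset.sum_mul]
          exact Finset.sum_congr rfl fun i _ => by ring
      _ = 0 := by rw [hS0 m]; ring
  have hD2val : ∀ v : Pt N, D2 (Ueps N n u₀ μ α ω ε) v (((fun _ => t m) : Fin N → ℝ), (0:ℝ)) =
      (deriv (deriv u₀) 0 + ε * ((N : ℝ) * Cm m)) * v.2 ^ 2 +
        (ε * ∑ i : Fin n, α i * (μ i * Real.cosh (Real.sqrt (μ i) * t m))) *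
          ∑ j : Fin N, (v.1 j) ^ 2 := by
    intro v
    set Gv : Pt N → ℝ := fun q => deriv u₀ q.2 * v.2 +
      ε * ∑ j : Fin N, ∑ i : Fin n,
        (α i * Real.cosh (Real.sqrt (μ i) * q.1 j) * (deriv (ω i) q.2 * v.2) +
          ω i q.2 * (α i * (Real.sinh (Real.sqrt (μ i) * q.1 j) * (Real.sqrt (μ i) * v.1 j))))
      with hGv
    have hEv : (fun q => fderiv ℝ (Ueps N n u₀ μ α ω ε) q v) =ᶠ[𝓝
        ((((fun _ => t m) : Fin N → ℝ), (0:ℝ)) : Pt N)] Gv := by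
      have hnhds : {q : Pt N | q.2 ∈ Ioo (-1 - σ) (1 + σ)} ∈ 𝓝
          ((((fun _ => t m) : Fin N → ℝ), (0:ℝ)) : Pt N) :=
        (hIopen.preimage continuous_snd).mem_nhds h0I
      filter_upwards [hnhds] with q hq
      rw [(hasF q hq).fderiv]
      simp [hCsnd, hCproj, hGv]
    set DGterm : Fin N → Fin n → (Pt N →L[ℝ] ℝ) := fun j i =>
      ((α i * Real.cosh (Real.sqrt (μ i) * t m)) •
          (v.2 • (deriv (deriv (ω i)) 0 • Csnd)) +
        (deriv (ω i) 0 * v.2) •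
          (α i • (Real.sinh (Real.sqrt (μ i) * t m) • (Real.sqrt (μ i) • Cproj j)))) +
      ((ω i 0) • (α i • ((Real.sqrt (μ i) * v.1 j) •
          (Real.cosh (Real.sqrt (μ i) * t m) • (Real.sqrt (μ i) • Cproj j)))) +
        (α i * (Real.sinh (Real.sqrt (μ i) * t m) * (Real.sqrt (μ i) * v.1 j))) •
          (deriv (ω i) 0 • Csnd)) with hDGterm
    have hGvF : HasFDerivAt Gv
        (v.2 • (deriv (deriv u₀) 0 • Csnd) + ε • ∑ j : Fin N, ∑ i : Fin n, DGterm j i)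
        (((fun _ => t m) : Fin N → ℝ), (0:ℝ)) := by
      have hterm : ∀ (j : Fin N) (i : Fin n), HasFDerivAt
          (fun q : Pt N => α i * Real.cosh (Real.sqrt (μ i) * q.1 j) * (deriv (ω i) q.2 * v.2) +
            ω i q.2 * (α i * (Real.sinh (Real.sqrt (μ i) * q.1 j) * (Real.sqrt (μ i) * v.1 j))))
          (DGterm j i) (((fun _ => t m) : Fin N → ℝ), (0:ℝ)) := by
        intro j i
        have hlin : HasFDerivAt (fun q : Pt N => Real.sqrt (μ i) * q.1 j)
            (Real.sqrt (μ i) • Cproj j) (((fun _ => t m) : Fin N → ℝ), (0:ℝ)) :=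
          (hprojF j _).const_mul _
        have hAd : HasFDerivAt (fun q : Pt N => α i * Real.cosh (Real.sqrt (μ i) * q.1 j))
            (α i • (Real.sinh (Real.sqrt (μ i) * t m) • (Real.sqrt (μ i) • Cproj j)))
            (((fun _ => t m) : Fin N → ℝ), (0:ℝ)) :=
          ((Real.hasDerivAt_cosh _).comp_hasFDerivAt _ hlin).const_mul (α i)
        have hBd : HasFDerivAt (fun q : Pt N => deriv (ω i) q.2 * v.2)
            (v.2 • (deriv (deriv (ω i)) 0 • Csnd))
            (((fun _ => t m) : Fin N → ℝ), (0:ℝ)) :=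
          by have hc := (hωd2 i).comp_hasFDerivAt ((((fun _ => t m) : Fin N → ℝ), (0:ℝ)) : Pt N) (hsndF _); exact hc.mul_const v.2
        have hCd : HasFDerivAt (fun q : Pt N => ω i q.2)
            (deriv (ω i) 0 • Csnd) (((fun _ => t m) : Fin N → ℝ), (0:ℝ)) :=
          (hωd1 i 0 h0I).comp_hasFDerivAt ((((fun _ => t m) : Fin N → ℝ), (0:ℝ)) : Pt N) (hsndF _)
        have hDd : HasFDerivAt
            (fun q : Pt N => α i * (Real.sinh (Real.sqrt (μ i) * q.1 j) *
              (Real.sqrt (μ i) * v.1 j)))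
            (α i • ((Real.sqrt (μ i) * v.1 j) •
              (Real.cosh (Real.sqrt (μ i) * t m) • (Real.sqrt (μ i) • Cproj j))))
            (((fun _ => t m) : Fin N → ℝ), (0:ℝ)) :=
          (((Real.hasDerivAt_sinh _).comp_hasFDerivAt _ hlin).mul_const
            (Real.sqrt (μ i) * v.1 j)).const_mul (α i)
        rw [hDGterm]
        exact (hAd.mul hBd).add (hCd.mul hDd)
      have hu0d : HasFDerivAt (fun q : Pt N => deriv u₀ q.2 * v.2)
          (v.2 • (deriv (deriv u₀) 0 • Csnd))
          (((fun _ => t m) : Fin N → ℝ), (0:ℝ)) :=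
        by have hc := hu₀d2.comp_hasFDerivAt ((((fun _ => t m) : Fin N → ℝ), (0:ℝ)) : Pt N) (hsndF _); exact hc.mul_const v.2
      have hsum := HasFDerivAt.fun_sum (x := ((((fun _ => t m) : Fin N → ℝ), (0:ℝ)) : Pt N))
        (fun j (_ : j ∈ Finset.univ) => HasFDerivAt.fun_sum
          (fun i (_ : i ∈ Finset.univ) => hterm j i))
      exact hu0d.add (hsum.const_mul ε)
    have hD2 : D2 (Ueps N n u₀ μ α ω ε) v (((fun _ => t m) : Fin N → ℝ), (0:ℝ)) =
        (v.2 • (deriv (deriv u₀) 0 • Csnd) + ε • ∑ j : Fin N, ∑ i : Fin n, DGterm j i) v := by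
      unfold D2
      rw [hEv.fderiv_eq, hGvF.fderiv]
    rw [hD2]
    simp [hDGterm, hCsnd, hCproj, hω0, hω'0]
    have hinner : ∀ j : Fin N,
        (∑ i : Fin n,
          (α i * Real.cosh (Real.sqrt (μ i) * t m) * (v.2 * (deriv (deriv (ω i)) 0 * v.2)) +
            α i * (Real.sqrt (μ i) * v.1 j *
              (Real.cosh (Real.sqrt (μ i) * t m) * (Real.sqrt (μ i) * v.1 j))))) =
        Cm m * v.2 ^ 2 +
          (∑ i : Fin n, α i * (μ i * Real.cosh (Real.sqrt (μ i) * t m))) * (v.1 j) ^ 2 := by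
      intro j
      rw [Finset.sum_add_distrib]
      congr 1
      · rw [hCm, Finset.sum_mul]
        exact Finset.sum_congr rfl fun i _ => by ring
      · rw [Finset.sum_mul]
        refine Finset.sum_congr rfl fun i _ => ?_
        have hμ : Real.sqrt (μ i) * Real.sqrt (μ i) = μ i := Real.mul_self_sqrt (hμpos i).le
        linear_combination (α i * Real.cosh (Real.sqrt (μ i) * t m) * (v.1 j)^2) * hμ
    rw [Finset.sum_congr rfl fun j (_ : j ∈ Finset.univ) => hinner j, Finset.sum_add_distrib,
      Finset.sum_const, Finset.card_univ, Fintype.card_fin, ← Finset.mul_sum, nsmul_eq_mul]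
    ring
  have hneg : ∀ w : Pt N, w ≠ 0 →
      (deriv (deriv u₀) 0 + ε * ((N : ℝ) * Cm m)) * w.2 ^ 2 +
        (ε * ∑ i : Fin n, α i * (μ i * Real.cosh (Real.sqrt (μ i) * t m))) *
          ∑ j : Fin N, (w.1 j) ^ 2 < 0 := by
    intro w hw
    have hA' := hA m
    have hεS : ε * ∑ i : Fin n, α i * (μ i * Real.cosh (Real.sqrt (μ i) * t m)) < 0 :=
      mul_neg_of_pos_of_neg hεpos (hS2 m)
    have hsumsq : (0:ℝ) ≤ ∑ j : Fin N, (w.1 j) ^ 2 :=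
      Finset.sum_nonneg fun j _ => sq_nonneg _
    rcases eq_or_ne w.2 0 with h2 | h2
    · have h1 : w.1 ≠ 0 := by
        intro h1
        exact hw (Prod.ext h1 h2)
      obtain ⟨j, hj⟩ := Function.ne_iff.1 h1
      have hpos : (0:ℝ) < ∑ j : Fin N, (w.1 j) ^ 2 :=
        Finset.sum_pos' (fun j _ => sq_nonneg _)
          ⟨j, Finset.mem_univ j,
            lt_of_le_of_ne (sq_nonneg _) (Ne.symm (pow_ne_zero 2 hj))⟩
      have ht1 : (deriv (deriv u₀) 0 + ε * ((N : ℝ) * Cm m)) * w.2 ^ 2 ≤ 0 :=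
        mul_nonpos_of_nonpos_of_nonneg hA'.le (sq_nonneg _)
      nlinarith
    · have ht1 : (deriv (deriv u₀) 0 + ε * ((N : ℝ) * Cm m)) * w.2 ^ 2 < 0 :=
        mul_neg_of_neg_of_pos hA' (by positivity)
      have ht2 : (ε * ∑ i : Fin n, α i * (μ i * Real.cosh (Real.sqrt (μ i) * t m))) *
          ∑ j : Fin N, (w.1 j) ^ 2 ≤ 0 :=
        mul_nonpos_of_nonpos_of_nonneg hεS.le hsumsq
      linarith
  have hUcd : ContDiffAt ℝ 2 (Ueps N n u₀ μ α ω ε)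
      (((fun _ => t m) : Fin N → ℝ), (0:ℝ)) := by
    have h1 : ContDiffAt ℝ 2 (fun q : Pt N => u₀ q.2)
        (((fun _ => t m) : Fin N → ℝ), (0:ℝ)) :=
      (hu₀C.contDiffAt (hIopen.mem_nhds h0I)).comp ((((fun _ => t m) : Fin N → ℝ), (0:ℝ)) : Pt N) contDiffAt_snd
    have h2 : ∀ (j : Fin N) (i : Fin n), ContDiffAt ℝ 2
        (fun q : Pt N => α i * Real.cosh (Real.sqrt (μ i) * q.1 j) * ω i q.2)
        (((fun _ => t m) : Fin N → ℝ), (0:ℝ)) := by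
      intro j i
      have hx : ContDiff ℝ 2 (fun q : Pt N => Real.sqrt (μ i) * q.1 j) :=
        contDiff_const.mul
          ((ContinuousLinearMap.proj j : (Fin N → ℝ) →L[ℝ] ℝ).contDiff.comp contDiff_fst)
      have hc : ContDiff ℝ 2 (fun q : Pt N => α i * Real.cosh (Real.sqrt (μ i) * q.1 j)) :=
        contDiff_const.mul (Real.contDiff_cosh.comp hx)
      have hw : ContDiffAt ℝ 2 (fun q : Pt N => ω i q.2)
          (((fun _ => t m) : Fin N → ℝ), (0:ℝ)) :=
        (((hωC i).contDiffAt (hIopen.mem_nhds h0I)).comp ((((fun _ => t m) : Fin N → ℝ), (0:ℝ)) : Pt N) contDiffAt_snd)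
      exact hc.contDiffAt.mul hw
    have hsum : ContDiffAt ℝ 2
        (fun q : Pt N => ∑ j : Fin N, ∑ i : Fin n,
          α i * Real.cosh (Real.sqrt (μ i) * q.1 j) * ω i q.2)
        (((fun _ => t m) : Fin N → ℝ), (0:ℝ)) :=
      ContDiffAt.sum fun j _ => ContDiffAt.sum fun i _ => h2 j i
    exact h1.add (contDiffAt_const.mul hsum)
  have hdiffF : DifferentiableAt ℝ (fderiv ℝ (Ueps N n u₀ μ α ω ε))
      (((fun _ => t m) : Fin N → ℝ), (0:ℝ)) :=
    (hUcd.fderiv_right (m := 1) (le_refl 2)).differentiableAt one_ne_zero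
  have hcompv : ∀ v : Pt N,
      fderiv ℝ (fderiv ℝ (Ueps N n u₀ μ α ω ε)) (((fun _ => t m) : Fin N → ℝ), (0:ℝ)) v v =
        D2 (Ueps N n u₀ μ α ω ε) v (((fun _ => t m) : Fin N → ℝ), (0:ℝ)) := by
    intro v
    have h := ((ContinuousLinearMap.apply ℝ ℝ v).hasFDerivAt.comp
      ((((fun _ => t m) : Fin N → ℝ), (0:ℝ)) : Pt N) hdiffF.hasFDerivAt).fderiv
    unfold D2
    have h2 : (fun q : Pt N => fderiv ℝ (Ueps N n u₀ μ α ω ε) q v) =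
        (⇑(ContinuousLinearMap.apply ℝ ℝ v) ∘ fderiv ℝ (Ueps N n u₀ μ α ω ε)) := rfl
    rw [h2, h]
    simp
  exact ⟨hfd0, fun w hw => by rw [hD2val w]; exact hneg w hw,
    my_secondDerivTest hUcd hfd0 (fun v hv => by rw [hcompv v, hD2val v]; exact hneg v hv)⟩
end
end

section
/- For every k ∈ ℕ and every μ₀ > 0 there exist n ∈ ℕ, real numbers μ₁, …, μ_n with μ₀/4 > μ₁ > μ₂ > … > μ_n > 0, and coefficients α₁, …, α_n ∈ ℝ with α₁ = −1 (the coefficient attached to the largest frequency μ₁), such that the function F(t) = Σ_{i=1}^n α_i cosh(√μ_i · t) has at least k distinct nondegenerate local maximum points, i.e. at least k points t with F'(t) = 0 and F''(t) < 0. -/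
open Set

section Helpers
open Finset Real

lemma sinh_mul_cosh (a b : ℝ) : Real.sinh a * Real.cosh b =
    (Real.sinh (a + b) + Real.sinh (a - b)) / 2 := by
  rw [Real.sinh_add, Real.sinh_sub]; ring

lemma expand (N : ℕ) (r : ℕ → ℝ) :
    ∃ δ : ℕ → ℝ, δ 0 = 0 ∧ δ (N + 1) = 1 / 2 ^ N ∧ (∀ m, N + 1 < m → δ m = 0) ∧
      ∀ u : ℝ, Real.sinh u * ∏ i ∈ Finset.range N, (Real.cosh u - r i) =
        ∑ m ∈ Finset.range (N + 2), δ m * Real.sinh (m * u) := by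
  induction N with
  | zero =>
    refine ⟨fun m => if m = 1 then 1 else 0, by simp, by simp, by intro m hm; simp; omega, ?_⟩
    intro u
    simp [Finset.sum_range_succ]
  | succ N ih =>
    obtain ⟨δ, h0, htop, hz, hid⟩ := ih
    refine ⟨fun m => if m = 0 then 0 else (δ (m - 1) + δ (m + 1)) / 2 - r N * δ m, by simp, ?_, ?_, ?_⟩
    · simp only [if_neg (Nat.succ_ne_zero _)]
      rw [show N + 1 + 1 - 1 = N + 1 by omega, htop, hz _ (by omega), hz _ (by omega)]
      ring
    · intro m hm
      simp only [if_neg (show m ≠ 0 by omega)]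
      rw [hz _ (by omega), hz _ (by omega), hz _ (by omega)]
      ring
    · intro u
      rw [Finset.prod_range_succ, ← mul_assoc, hid]
      -- LHS = (∑ δ m sinh(mu)) * (cosh u - r N)
      have expand1 : (∑ m ∈ Finset.range (N + 2), δ m * Real.sinh (m * u)) * (Real.cosh u - r N)
          = (∑ m ∈ Finset.range (N + 2), δ m / 2 * Real.sinh ((m + 1) * u))
            + (∑ m ∈ Finset.range (N + 2), δ m / 2 * Real.sinh ((m - 1 : ℝ) * u))
            - (∑ m ∈ Finset.range (N + 2), r N * δ m * Real.sinh (m * u)) := by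
        rw [Finset.sum_mul, ← Finset.sum_add_distrib, ← Finset.sum_sub_distrib]
        refine Finset.sum_congr rfl fun m _ => ?_
        have h := sinh_mul_cosh (m * u) u
        rw [show (↑m * u + u) = (↑m + 1) * u by ring, show (↑m * u - u) = ((↑m : ℝ) - 1) * u by ring] at h
        linear_combination (δ m) * h
      rw [expand1]
      have hA : (∑ m ∈ Finset.range (N + 2), δ m / 2 * Real.sinh ((m + 1) * u))
          = ∑ m ∈ Finset.range (N + 3), δ (m - 1) / 2 * Real.sinh (m * u) := by
        rw [Finset.sum_range_succ' (fun m => δ (m - 1) / 2 * Real.sinh (m * u)) (N + 2)]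
        simp only [Nat.add_sub_cancel, Nat.cast_zero, zero_mul, Real.sinh_zero, mul_zero, add_zero]
        refine Finset.sum_congr rfl fun i _ => ?_
        rw [show ((i + 1 : ℕ) : ℝ) * u = ((i : ℝ) + 1) * u by push_cast; ring]
      have hB : (∑ m ∈ Finset.range (N + 2), δ m / 2 * Real.sinh ((m - 1 : ℝ) * u))
          = ∑ m ∈ Finset.range (N + 3), δ (m + 1) / 2 * Real.sinh (m * u) := by
        rw [Finset.sum_range_succ' (fun m => δ m / 2 * Real.sinh (((m : ℝ) - 1) * u)) (N + 1)]
        rw [Finset.sum_range_succ (fun m => δ (m + 1) / 2 * Real.sinh ((m : ℝ) * u)) (N + 2)]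
        rw [Finset.sum_range_succ (fun m => δ (m + 1) / 2 * Real.sinh ((m : ℝ) * u)) (N + 1)]
        rw [h0, hz (N + 2) (by omega), hz (N + 3) (by omega)]
        simp only [zero_mul, add_zero, zero_div, mul_zero]
        refine Finset.sum_congr rfl fun i _ => ?_
        rw [show ((i + 1 : ℕ) : ℝ) - 1 = (i : ℝ) by push_cast; ring]
      have hC : (∑ m ∈ Finset.range (N + 2), r N * δ m * Real.sinh (m * u))
          = ∑ m ∈ Finset.range (N + 3), r N * δ m * Real.sinh (m * u) := by
        rw [Finset.sum_range_succ (fun m => r N * δ m * Real.sinh ((m : ℝ) * u)) (N + 2)]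
        rw [hz (N + 2) (by omega)]
        ring
      rw [hA, hB, hC, ← Finset.sum_add_distrib, ← Finset.sum_sub_distrib]
      refine Finset.sum_congr rfl fun m _ => ?_
      rcases Nat.eq_zero_or_pos m with hm | hm
      · subst hm; simp
      · simp only [if_neg (show ¬ (m = 0) by omega)]
        ring

lemma diff_prod (S : Finset ℕ) (C : ℕ → ℝ) :
    Differentiable ℝ (fun v => ∏ i ∈ S, (Real.cosh v - C i)) := by
  classical
  induction S using Finset.induction with
  | empty => simpa using differentiable_const (1 : ℝ)
  | @insert a S ha ih =>
      simp only [Finset.prod_insert ha]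
      exact (Real.differentiable_cosh.sub (differentiable_const _)).mul ih

lemma reindex (n : ℕ) (g : ℕ → ℝ) (hg0 : g 0 = 0) :
    ∑ i : Fin n, g (n - (i : ℕ)) = ∑ m ∈ Finset.range (n + 1), g m := by
  rw [Fin.sum_univ_eq_sum_range (fun j => g (n - j)) n,
    Finset.sum_range_succ' g n, hg0, add_zero,
    ← Finset.sum_range_reflect (fun j => g (j + 1)) n]
  refine Finset.sum_congr rfl fun j hj => ?_
  simp only [Finset.mem_range] at hj
  congr 1
  omega

end Helpers

noncomputable section

theorem statement17 (k : ℕ) (μ₀ : ℝ) (hμ₀ : 0 < μ₀) :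
    ∃ (n : ℕ) (hn : 0 < n) (μ α : Fin n → ℝ),
      -- μ₀/4 > μ₁ > μ₂ > … > μ_n > 0
      StrictAnti μ ∧ (∀ i, 0 < μ i) ∧ μ ⟨0, hn⟩ < μ₀ / 4 ∧
      -- α₁ = −1 (the coefficient attached to the largest frequency μ₁)
      α ⟨0, hn⟩ = -1 ∧
      -- F(t) = Σ_i α_i cosh(√μ_i t) has at least k nondegenerate local maximum points
      ∃ T : Finset ℝ, k ≤ T.card ∧ ∀ s ∈ T,
        deriv (fun r => ∑ i, α i * Real.cosh (Real.sqrt (μ i) * r)) s = 0 ∧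
        deriv (deriv (fun r => ∑ i, α i * Real.cosh (Real.sqrt (μ i) * r))) s < 0 := by
  classical
  obtain ⟨δ, hδ0, hδtop, hδz, hδid⟩ := expand (2 * k) (fun i => Real.cosh ((i : ℝ) + 1))
  set n : ℕ := 2 * k + 1 with hn_def
  have hn : 0 < n := by omega
  set c : ℝ := μ₀ / (8 * (n : ℝ) ^ 2) with hc_def
  have hnR : (0 : ℝ) < (n : ℝ) := by positivity
  have hc : 0 < c := by positivity
  have hsc : 0 < Real.sqrt c := Real.sqrt_pos.mpr hc
  set K : ℝ := (n : ℝ) * 2 ^ (2 * k) with hK_def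
  have hK : 0 < K := by positivity
  set μ : Fin n → ℝ := fun i => c * ((n - (i : ℕ) : ℕ) : ℝ) ^ 2 with hμ_def
  set α : Fin n → ℝ := fun i => -K * δ (n - (i : ℕ)) / ((n - (i : ℕ) : ℕ) : ℝ) with hα_def
  have hpos : ∀ i : Fin n, (0 : ℝ) < ((n - (i : ℕ) : ℕ) : ℝ) := by
    intro i
    have := i.isLt
    exact_mod_cast Nat.sub_pos_of_lt this
  have hsqrt : ∀ i : Fin n, Real.sqrt (μ i) = Real.sqrt c * ((n - (i : ℕ) : ℕ) : ℝ) := by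
    intro i
    rw [hμ_def]
    rw [Real.sqrt_mul hc.le, Real.sqrt_sq (hpos i).le]
  refine ⟨n, hn, μ, α, ?_, ?_, ?_, ?_, ?_⟩
  · -- StrictAnti
    intro i j hij
    have h1 : (n - (j : ℕ) : ℕ) < (n - (i : ℕ) : ℕ) := by
      have := j.isLt; have : (i : ℕ) < (j : ℕ) := hij; omega
    have h1R : ((n - (j : ℕ) : ℕ) : ℝ) < ((n - (i : ℕ) : ℕ) : ℝ) := by exact_mod_cast h1
    have := pow_lt_pow_left₀ h1R (hpos j).le (by norm_num : 2 ≠ 0)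
    exact mul_lt_mul_of_pos_left this hc
  · intro i
    exact mul_pos hc (pow_pos (hpos i) 2)
  · -- μ 0 < μ₀ / 4
    show c * ((n - 0 : ℕ) : ℝ) ^ 2 < μ₀ / 4
    rw [Nat.sub_zero, hc_def]
    rw [div_mul_eq_mul_div, div_lt_div_iff₀ (by positivity) (by norm_num)]
    nlinarith [mul_pos hμ₀ (pow_pos hnR 2)]
  · -- α 0 = -1
    show -K * δ (n - 0) / ((n - 0 : ℕ) : ℝ) = -1
    rw [Nat.sub_zero, hn_def]
    have h2k : δ (2 * k + 1) = 1 / 2 ^ (2 * k) := hδtop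
    rw [h2k, hK_def, hn_def]
    have : ((2 * k + 1 : ℕ) : ℝ) ≠ 0 := by positivity
    field_simp
  · -- main part
    have hid' : ∀ u : ℝ, (∑ m ∈ Finset.range (n + 1), δ m * Real.sinh ((m : ℝ) * u))
        = Real.sinh u * ∏ i ∈ Finset.range (2 * k), (Real.cosh u - Real.cosh ((i : ℝ) + 1)) := by
      intro u
      rw [show n + 1 = 2 * k + 2 by omega]
      exact (hδid u).symm
    have hF' : ∀ s : ℝ, HasDerivAt (fun r => ∑ i, α i * Real.cosh (Real.sqrt (μ i) * r))
        (-(K * Real.sqrt c) *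
          ∑ m ∈ Finset.range (n + 1), δ m * Real.sinh ((m : ℝ) * (Real.sqrt c * s))) s := by
      intro s
      have h1 : HasDerivAt (fun r => ∑ i, α i * Real.cosh (Real.sqrt (μ i) * r))
          (∑ i : Fin n, α i * (Real.sinh (Real.sqrt (μ i) * s) * (Real.sqrt (μ i) * 1))) s := by
        apply HasDerivAt.fun_sum
        intro i _
        exact ((Real.hasDerivAt_cosh _).comp s
          ((hasDerivAt_id s).const_mul (Real.sqrt (μ i)))).const_mul (α i)
      have hterm : ∀ i : Fin n, α i * (Real.sinh (Real.sqrt (μ i) * s) * (Real.sqrt (μ i) * 1))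
          = -(K * Real.sqrt c) *
            (δ (n - (i : ℕ)) * Real.sinh (((n - (i : ℕ) : ℕ) : ℝ) * (Real.sqrt c * s))) := by
        intro i
        have hne : ((n - (i : ℕ) : ℕ) : ℝ) ≠ 0 := (hpos i).ne'
        simp only [hα_def, hsqrt i]
        rw [show Real.sqrt c * ((n - (i : ℕ) : ℕ) : ℝ) * s
            = ((n - (i : ℕ) : ℕ) : ℝ) * (Real.sqrt c * s) by ring]
        rw [div_mul_eq_mul_div, div_eq_iff hne]
        ring
      have e1 := Finset.sum_congr rfl (fun i (_ : i ∈ Finset.univ) => hterm i)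
      have e3 := reindex n (fun m => δ m * Real.sinh ((m : ℝ) * (Real.sqrt c * s)))
        (by simp [hδ0])
      convert h1 using 1
      rw [e1, ← Finset.mul_sum]
      congr 1
      exact e3.symm
    have hderivF : deriv (fun r => ∑ i, α i * Real.cosh (Real.sqrt (μ i) * r))
        = fun s => -(K * Real.sqrt c) *
            ∑ m ∈ Finset.range (n + 1), δ m * Real.sinh ((m : ℝ) * (Real.sqrt c * s)) :=
      funext fun s => (hF' s).deriv
    have hF'' : ∀ s : ℝ, HasDerivAt
        (fun s => -(K * Real.sqrt c) *
          ∑ m ∈ Finset.range (n + 1), δ m * Real.sinh ((m : ℝ) * (Real.sqrt c * s)))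
        (-(K * Real.sqrt c) * ∑ m ∈ Finset.range (n + 1),
          δ m * (Real.cosh ((m : ℝ) * (Real.sqrt c * s)) * ((m : ℝ) * (Real.sqrt c * 1)))) s := by
      intro s
      apply HasDerivAt.const_mul
      apply HasDerivAt.fun_sum
      intro m _
      exact ((Real.hasDerivAt_sinh _).comp s
        (((hasDerivAt_id s).const_mul (Real.sqrt c)).const_mul (m : ℝ))).const_mul (δ m)
    refine ⟨(Finset.Icc 1 k).image (fun j : ℕ => 2 * (j : ℝ) / Real.sqrt c), ?_, ?_⟩
    · have hinj : Function.Injective (fun j : ℕ => 2 * (j : ℝ) / Real.sqrt c) := by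
        intro a b hab
        simp only at hab
        rw [div_eq_div_iff hsc.ne' hsc.ne'] at hab
        have h := mul_right_cancel₀ hsc.ne' hab
        have : (a : ℝ) = b := by linarith
        exact_mod_cast this
      rw [Finset.card_image_of_injective _ hinj, Nat.card_Icc]
      omega
    · intro s hs
      simp only [Finset.mem_image, Finset.mem_Icc] at hs
      obtain ⟨j, ⟨hj1, hj2⟩, rfl⟩ := hs
      obtain ⟨j', rfl⟩ : ∃ j', j = j' + 1 := ⟨j - 1, by omega⟩
      set u : ℝ := 2 * ((j' + 1 : ℕ) : ℝ) with hu_def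
      have hu : Real.sqrt c * (2 * ((j' + 1 : ℕ) : ℝ) / Real.sqrt c) = u := by
        rw [hu_def, mul_comm, div_mul_cancel₀ _ hsc.ne']
      have hmem : 2 * j' + 1 ∈ Finset.range (2 * k) := by
        simp only [Finset.mem_range]; omega
      have hcast : ((2 * j' + 1 : ℕ) : ℝ) + 1 = u := by
        rw [hu_def]; push_cast; ring
      have hupos : 0 < u := by rw [hu_def]; positivity
      constructor
      · rw [hderivF]
        simp only []
        rw [hu, hid' u, Finset.prod_eq_zero hmem (by rw [hcast, sub_self])]
        ring
      · have hd2 : deriv (deriv (fun r => ∑ i, α i * Real.cosh (Real.sqrt (μ i) * r)))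
            (2 * ((j' + 1 : ℕ) : ℝ) / Real.sqrt c)
            = -(K * Real.sqrt c) * ∑ m ∈ Finset.range (n + 1),
                δ m * (Real.cosh ((m : ℝ) * u) * ((m : ℝ) * (Real.sqrt c * 1))) := by
          rw [hderivF, (hF'' (2 * ((j' + 1 : ℕ) : ℝ) / Real.sqrt c)).deriv, hu]
        have hH1 : HasDerivAt (fun v => ∑ m ∈ Finset.range (n + 1), δ m * Real.sinh ((m : ℝ) * v))
            (∑ m ∈ Finset.range (n + 1), δ m * (Real.cosh ((m : ℝ) * u) * ((m : ℝ) * 1))) u :=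
          HasDerivAt.fun_sum fun m _ => ((Real.hasDerivAt_sinh _).comp u
            ((hasDerivAt_id u).const_mul (m : ℝ))).const_mul (δ m)
        set Q : ℝ := ∏ i ∈ (Finset.range (2 * k)).erase (2 * j' + 1),
          (Real.cosh u - Real.cosh ((i : ℝ) + 1)) with hQ_def
        have hfun : (fun v => ∑ m ∈ Finset.range (n + 1), δ m * Real.sinh ((m : ℝ) * v))
            = fun v => (Real.cosh v - Real.cosh (((2 * j' + 1 : ℕ) : ℝ) + 1)) *
              (Real.sinh v * ∏ i ∈ (Finset.range (2 * k)).erase (2 * j' + 1),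
                (Real.cosh v - Real.cosh ((i : ℝ) + 1))) := by
          funext v
          rw [hid' v, ← Finset.mul_prod_erase _ _ hmem]
          ring
        rw [hfun] at hH1
        have hQdiff : DifferentiableAt ℝ (fun v => Real.sinh v *
            ∏ i ∈ (Finset.range (2 * k)).erase (2 * j' + 1),
              (Real.cosh v - Real.cosh ((i : ℝ) + 1))) u :=
          (Real.differentiable_sinh.mul
            (diff_prod _ (fun i => Real.cosh ((i : ℝ) + 1)))).differentiableAt
        have hH2 := ((Real.hasDerivAt_cosh u).sub_const
          (Real.cosh (((2 * j' + 1 : ℕ) : ℝ) + 1))).mul hQdiff.hasDerivAt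
        have huniq := hH1.unique hH2
        have hC0 : Real.cosh (((2 * j' + 1 : ℕ) : ℝ) + 1) = Real.cosh u := by rw [hcast]
        rw [hC0, sub_self, zero_mul, add_zero] at huniq
        have hsum2 : ∑ m ∈ Finset.range (n + 1),
              δ m * (Real.cosh ((m : ℝ) * u) * ((m : ℝ) * (Real.sqrt c * 1)))
            = Real.sqrt c * ((Real.sinh u * (Real.sinh u * Q))) := by
          rw [← huniq, Finset.mul_sum]
          exact Finset.sum_congr rfl fun m _ => by ring
        rw [hd2, hsum2]
        have hsinh : 0 < Real.sinh u := Real.sinh_pos_iff.mpr hupos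
        have hQpos : 0 < Q := by
          rw [hQ_def, show (Finset.range (2 * k)).erase (2 * j' + 1)
              = Finset.range (2 * j' + 1) ∪ Finset.Ico (2 * j' + 2) (2 * k) by
            ext m
            simp only [Finset.mem_erase, Finset.mem_range, Finset.mem_union, Finset.mem_Ico]
            omega,
            Finset.prod_union (by
              rw [Finset.disjoint_left]
              intro a ha hb
              simp only [Finset.mem_range] at ha
              simp only [Finset.mem_Ico] at hb
              omega)]
          have hP1 : 0 < ∏ i ∈ Finset.range (2 * j' + 1),
              (Real.cosh u - Real.cosh ((i : ℝ) + 1)) := by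
            apply Finset.prod_pos
            intro i hi
            simp only [Finset.mem_range] at hi
            have hiR : (i : ℝ) < 2 * j' + 1 := by exact_mod_cast hi
            have h1 : (0 : ℝ) < (i : ℝ) + 1 := by positivity
            have h2 : (i : ℝ) + 1 < u := by rw [hu_def]; push_cast; linarith
            have habs : |(i : ℝ) + 1| < |u| := by
              rw [abs_of_pos h1, abs_of_pos (lt_trans h1 h2)]; exact h2
            have := Real.cosh_lt_cosh.mpr habs
            linarith
          have hP2 : 0 < ∏ i ∈ Finset.Ico (2 * j' + 2) (2 * k),
              (Real.cosh u - Real.cosh ((i : ℝ) + 1)) := by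
            have heq : ∏ i ∈ Finset.Ico (2 * j' + 2) (2 * k),
                (Real.cosh u - Real.cosh ((i : ℝ) + 1))
                = (-1 : ℝ) ^ (Finset.Ico (2 * j' + 2) (2 * k)).card *
                  ∏ i ∈ Finset.Ico (2 * j' + 2) (2 * k),
                    (Real.cosh ((i : ℝ) + 1) - Real.cosh u) := by
              rw [← Finset.prod_const, ← Finset.prod_mul_distrib]
              exact Finset.prod_congr rfl fun i _ => by ring
            rw [heq, Nat.card_Ico]
            have heven : Even (2 * k - (2 * j' + 2)) := ⟨k - (j' + 1), by omega⟩
            rw [heven.neg_one_pow, one_mul]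
            apply Finset.prod_pos
            intro i hi
            simp only [Finset.mem_Ico] at hi
            have hiR : ((2 * j' + 2 : ℕ) : ℝ) ≤ (i : ℝ) := by exact_mod_cast hi.1
            have h2 : u < (i : ℝ) + 1 := by rw [hu_def]; push_cast at hiR ⊢; linarith
            have habs : |u| < |(i : ℝ) + 1| := by
              rw [abs_of_pos hupos, abs_of_pos (lt_trans hupos h2)]; exact h2
            have := Real.cosh_lt_cosh.mpr habs
            linarith
          exact mul_pos hP1 hP2
        nlinarith [mul_pos (mul_pos hK hsc) (mul_pos hsc (mul_pos hsinh (mul_pos hsinh hQpos)))]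
end
end

section
/- Let k ∈ ℕ with k ≥ 2 and let 0 < t₁ < t₂ < … < t_k be real numbers. Define q(t) = −∏_{ℓ=1}^k (t² − t_ℓ²). Then every critical point of q is nondegenerate: for every τ ∈ ℝ, if q'(τ) = 0 then q''(τ) ≠ 0. More precisely, q'(0) = 0 with q''(0) ≠ 0, and for every τ ≠ 0 with q'(τ) = 0 one has q''(τ) = −4 τ² q(τ) Σ_{ℓ=1}^k (τ² − t_ℓ²)^{−2} ≠ 0. -/
open Set

noncomputable section

theorem statement18 (k : ℕ) (hk : 2 ≤ k)
    (t : Fin k → ℝ) (ht : StrictMono t) (htpos : ∀ i, 0 < t i) :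
    -- q(τ) = −∏_ℓ (τ² − t_ℓ²)
    -- every critical point of q is nondegenerate
    (∀ τ : ℝ, deriv (fun r : ℝ => -∏ l, (r ^ 2 - (t l) ^ 2)) τ = 0 →
      deriv (deriv (fun r : ℝ => -∏ l, (r ^ 2 - (t l) ^ 2))) τ ≠ 0) ∧
    -- q'(0) = 0 and q''(0) ≠ 0
    deriv (fun r : ℝ => -∏ l, (r ^ 2 - (t l) ^ 2)) 0 = 0 ∧
    deriv (deriv (fun r : ℝ => -∏ l, (r ^ 2 - (t l) ^ 2))) 0 ≠ 0 ∧
    -- for τ ≠ 0 with q'(τ) = 0, q''(τ) = −4τ² q(τ) Σ_ℓ (τ² − t_ℓ²)⁻² ≠ 0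
    ∀ τ : ℝ, τ ≠ 0 → deriv (fun r : ℝ => -∏ l, (r ^ 2 - (t l) ^ 2)) τ = 0 →
      deriv (deriv (fun r : ℝ => -∏ l, (r ^ 2 - (t l) ^ 2))) τ =
        -4 * τ ^ 2 * (-∏ l, (τ ^ 2 - (t l) ^ 2)) * ∑ l, ((τ ^ 2 - (t l) ^ 2) ^ 2)⁻¹ ∧
      deriv (deriv (fun r : ℝ => -∏ l, (r ^ 2 - (t l) ^ 2))) τ ≠ 0 := by
  classical
  have hne : Nonempty (Fin k) := ⟨⟨0, by omega⟩⟩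
  -- first derivative
  have hd1 : ∀ τ : ℝ, HasDerivAt (fun r : ℝ => -∏ l, (r ^ 2 - (t l) ^ 2))
      (-∑ l, (∏ m ∈ Finset.univ.erase l, (τ^2 - t m ^2)) * (2*τ)) τ := by
    intro τ
    have h := (HasDerivAt.fun_finsetProd (u := Finset.univ)
      (f := fun (i : Fin k) (r : ℝ) => r^2 - t i ^2) (f' := fun i => 2*τ)
      (fun i _ => by simpa using ((hasDerivAt_pow 2 τ).sub_const ((t i)^2)))).fun_neg
    simpa [smul_eq_mul] using h
  have hD1 : deriv (fun r : ℝ => -∏ l, (r ^ 2 - (t l) ^ 2))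
      = fun τ => -∑ l, (∏ m ∈ Finset.univ.erase l, (τ^2 - t m ^2)) * (2*τ) :=
    funext fun τ => (hd1 τ).deriv
  -- second derivative
  have hd2 : ∀ τ : ℝ, HasDerivAt
      (fun r : ℝ => -∑ l, (∏ m ∈ Finset.univ.erase l, (r^2 - t m ^2)) * (2*r))
      (-∑ l, ((∑ n ∈ Finset.univ.erase l,
          (∏ m ∈ (Finset.univ.erase l).erase n, (τ^2 - t m ^2)) * (2*τ)) * (2*τ)
        + (∏ m ∈ Finset.univ.erase l, (τ^2 - t m ^2)) * 2)) τ := by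
    intro τ
    have h2τ : HasDerivAt (fun r : ℝ => 2*r) 2 τ := by
      simpa using (hasDerivAt_id τ).const_mul (2:ℝ)
    have h := (HasDerivAt.fun_sum
      (fun (l : Fin k) (_ : l ∈ Finset.univ) =>
        ((HasDerivAt.fun_finsetProd (u := Finset.univ.erase l)
          (f := fun (m : Fin k) (r : ℝ) => r^2 - t m ^2) (f' := fun m => 2*τ)
          (fun m _ => by simpa using ((hasDerivAt_pow 2 τ).sub_const ((t m)^2)))).mul
          h2τ))).fun_neg
    simpa [smul_eq_mul] using h
  have hD2 : ∀ τ : ℝ, deriv (deriv (fun r : ℝ => -∏ l, (r ^ 2 - (t l) ^ 2))) τ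
      = -∑ l, ((∑ n ∈ Finset.univ.erase l,
          (∏ m ∈ (Finset.univ.erase l).erase n, (τ^2 - t m ^2)) * (2*τ)) * (2*τ)
        + (∏ m ∈ Finset.univ.erase l, (τ^2 - t m ^2)) * 2) := by
    intro τ; rw [hD1]; exact (hd2 τ).deriv
  -- squares of distinct positive values are distinct
  have hsq : ∀ {m j : Fin k}, m ≠ j → t m ^ 2 ≠ t j ^ 2 := by
    intro m j hmj he
    have h1 : (t m - t j) * (t m + t j) = 0 := by ring_nf; nlinarith [he]
    rcases mul_eq_zero.mp h1 with h | h
    · exact hmj (ht.injective (by linarith))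
    · have := htpos m; have := htpos j; linarith
  -- q'(0) = 0
  have h10 : deriv (fun r : ℝ => -∏ l, (r ^ 2 - (t l) ^ 2)) 0 = 0 := by
    rw [hD1]; simp
  -- q''(0) ≠ 0
  have h20 : deriv (deriv (fun r : ℝ => -∏ l, (r ^ 2 - (t l) ^ 2))) 0 ≠ 0 := by
    rw [hD2 0]
    have hcard : ∀ l : Fin k, (Finset.univ.erase l).card = k - 1 := by
      intro l
      rw [Finset.card_erase_of_mem (Finset.mem_univ l)]
      simp
    have hval : ∀ l : Fin k, ∏ m ∈ Finset.univ.erase l, ((0:ℝ)^2 - t m ^2)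
        = (-1)^(k-1) * ∏ m ∈ Finset.univ.erase l, (t m)^2 := by
      intro l
      calc ∏ m ∈ Finset.univ.erase l, ((0:ℝ)^2 - t m ^2)
          = ∏ m ∈ Finset.univ.erase l, ((-1) * (t m ^2)) :=
            Finset.prod_congr rfl (fun m _ => by ring)
        _ = (-1)^((Finset.univ.erase l).card) * ∏ m ∈ Finset.univ.erase l, (t m)^2 := by
            rw [Finset.prod_mul_distrib, Finset.prod_const]
        _ = (-1)^(k-1) * ∏ m ∈ Finset.univ.erase l, (t m)^2 := by rw [hcard l]
    have hsum : ∑ l : Fin k, ((∑ n ∈ Finset.univ.erase l,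
          (∏ m ∈ (Finset.univ.erase l).erase n, ((0:ℝ)^2 - t m ^2)) * (2*0)) * (2*0)
        + (∏ m ∈ Finset.univ.erase l, ((0:ℝ)^2 - t m ^2)) * 2)
        = (-1)^(k-1) * (2 * ∑ l : Fin k, ∏ m ∈ Finset.univ.erase l, (t m)^2) := by
      rw [Finset.sum_congr rfl (fun l (_ : l ∈ Finset.univ) => by
        rw [hval l]
        ring : ∀ l ∈ Finset.univ, _ = ((-1:ℝ))^(k-1) * (2 * ∏ m ∈ Finset.univ.erase l, (t m)^2))]
      rw [← Finset.mul_sum, ← Finset.mul_sum]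
    rw [hsum]
    have hpos : 0 < ∑ l : Fin k, ∏ m ∈ Finset.univ.erase l, (t m)^2 :=
      Finset.sum_pos (fun l _ => Finset.prod_pos fun m _ => pow_pos (htpos m) 2)
        Finset.univ_nonempty
    intro h
    have h1 : ((-1:ℝ))^(k-1) ≠ 0 := pow_ne_zero _ (by norm_num)
    have := mul_ne_zero h1 (by positivity : (2 * ∑ l : Fin k,
      ∏ m ∈ Finset.univ.erase l, (t m)^2) ≠ 0)
    simp only [neg_eq_zero] at h
    exact this h
  -- the main statement for τ ≠ 0
  have hmain : ∀ τ : ℝ, τ ≠ 0 → deriv (fun r : ℝ => -∏ l, (r ^ 2 - (t l) ^ 2)) τ = 0 →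
      deriv (deriv (fun r : ℝ => -∏ l, (r ^ 2 - (t l) ^ 2))) τ =
        -4 * τ ^ 2 * (-∏ l, (τ ^ 2 - (t l) ^ 2)) * ∑ l, ((τ ^ 2 - (t l) ^ 2) ^ 2)⁻¹ ∧
      deriv (deriv (fun r : ℝ => -∏ l, (r ^ 2 - (t l) ^ 2))) τ ≠ 0 := by
    intro τ hτ hcrit
    rw [hD1] at hcrit
    have hcrit' : ∑ l : Fin k, ∏ m ∈ Finset.univ.erase l, (τ^2 - t m ^2) = 0 := by
      have h2τ : (2*τ : ℝ) ≠ 0 := by simpa using hτ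
      have := neg_eq_zero.mp hcrit
      rw [← Finset.sum_mul] at this
      exact (mul_eq_zero.mp this).resolve_right h2τ
    -- all factors nonzero
    have hs : ∀ l : Fin k, τ^2 - t l ^2 ≠ 0 := by
      intro j hj0
      have hterm : ∀ l ∈ Finset.univ, l ≠ j →
          ∏ m ∈ Finset.univ.erase l, (τ^2 - t m ^2) = 0 := by
        intro l _ hlj
        exact Finset.prod_eq_zero (Finset.mem_erase.mpr ⟨Ne.symm hlj, Finset.mem_univ j⟩) hj0
      have hj : ∏ m ∈ Finset.univ.erase j, (τ^2 - t m ^2) = 0 := by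
        rw [Finset.sum_eq_single j hterm (fun h => absurd (Finset.mem_univ j) h)] at hcrit'
        exact hcrit'
      have : ∀ m ∈ Finset.univ.erase j, τ^2 - t m ^2 ≠ 0 := by
        intro m hm
        have hmj : m ≠ j := (Finset.mem_erase.mp hm).1
        have hτ2 : τ^2 = t j ^2 := by linarith [hj0]
        rw [hτ2]
        intro h
        exact hsq hmj (by linarith)
      exact Finset.prod_ne_zero_iff.mpr this hj
    have hf : (∏ l, (τ ^ 2 - (t l) ^ 2)) ≠ 0 :=
      Finset.prod_ne_zero_iff.mpr fun l _ => hs l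
    -- erase products as f * inv
    have hpe : ∀ l : Fin k, ∏ m ∈ Finset.univ.erase l, (τ^2 - t m ^2)
        = (∏ l, (τ ^ 2 - (t l) ^ 2)) * (τ^2 - t l ^2)⁻¹ := by
      intro l
      rw [eq_mul_inv_iff_mul_eq₀ (hs l)]
      exact Finset.prod_erase_mul _ _ (Finset.mem_univ l)
    -- sum of inverses vanishes
    have hS : ∑ l : Fin k, (τ^2 - t l ^2)⁻¹ = 0 := by
      have : (∏ l, (τ ^ 2 - (t l) ^ 2)) * ∑ l : Fin k, (τ^2 - t l ^2)⁻¹ = 0 := by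
        rw [Finset.mul_sum, ← hcrit']
        exact Finset.sum_congr rfl fun l _ => (hpe l).symm
      exact (mul_eq_zero.mp this).resolve_left hf
    -- inner sums
    have hA : ∀ l : Fin k, ∑ n ∈ Finset.univ.erase l,
        ∏ m ∈ (Finset.univ.erase l).erase n, (τ^2 - t m ^2)
        = -(∏ l, (τ ^ 2 - (t l) ^ 2)) * ((τ^2 - t l ^2)^2)⁻¹ := by
      intro l
      have hstep : ∀ n ∈ Finset.univ.erase l,
          ∏ m ∈ (Finset.univ.erase l).erase n, (τ^2 - t m ^2)
          = (∏ l, (τ ^ 2 - (t l) ^ 2)) * (τ^2 - t l ^2)⁻¹ * (τ^2 - t n ^2)⁻¹ := by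
        intro n hn
        rw [eq_mul_inv_iff_mul_eq₀ (hs n), Finset.prod_erase_mul _ _ hn]
        exact hpe l
      rw [Finset.sum_congr rfl hstep, ← Finset.mul_sum,
        Finset.sum_erase_eq_sub (Finset.mem_univ l), hS]
      rw [← inv_pow]
      ring
    -- assemble the identity
    have hident : deriv (deriv (fun r : ℝ => -∏ l, (r ^ 2 - (t l) ^ 2))) τ =
        -4 * τ ^ 2 * (-∏ l, (τ ^ 2 - (t l) ^ 2)) * ∑ l, ((τ ^ 2 - (t l) ^ 2) ^ 2)⁻¹ := by
      rw [hD2 τ]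
      have : ∀ l : Fin k, ((∑ n ∈ Finset.univ.erase l,
            (∏ m ∈ (Finset.univ.erase l).erase n, (τ^2 - t m ^2)) * (2*τ)) * (2*τ)
          + (∏ m ∈ Finset.univ.erase l, (τ^2 - t m ^2)) * 2)
          = 4 * τ^2 * (-(∏ l, (τ ^ 2 - (t l) ^ 2))) * ((τ^2 - t l ^2)^2)⁻¹
            + 2 * (∏ l, (τ ^ 2 - (t l) ^ 2)) * (τ^2 - t l ^2)⁻¹ := by
        intro l
        rw [← Finset.sum_mul, hA l, hpe l]
        ring
      rw [Finset.sum_congr rfl fun l _ => this l, Finset.sum_add_distrib,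
        ← Finset.mul_sum, ← Finset.mul_sum, hS]
      ring
    refine ⟨hident, ?_⟩
    rw [hident]
    have hsumpos : 0 < ∑ l, ((τ ^ 2 - (t l) ^ 2) ^ 2)⁻¹ :=
      Finset.sum_pos (fun l _ => inv_pos.mpr (pow_two_pos_of_ne_zero (hs l)))
        Finset.univ_nonempty
    exact mul_ne_zero (mul_ne_zero (mul_ne_zero (by norm_num) (pow_ne_zero 2 hτ))
      (neg_ne_zero.mpr hf)) (ne_of_gt hsumpos)
  refine ⟨?_, h10, h20, hmain⟩
  intro τ hcrit
  by_cases hτ : τ = 0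
  · subst hτ; exact h20
  · exact (hmain τ hτ hcrit).2
end
end
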